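/- arXiv:1809.07344 — 5 statements merged into one kernel-verified Lean document; each statement's English description precedes it below -/
import Mathlib

section
/- For all natural numbers n and i with 0 ≤ i ≤ n and every real number t > 0, the improper integral ∫₀^∞ sⁱ/(1+s·t)^(n+2) ds converges and satisfies (n+1) · ∫₀^∞ sⁱ/(1+s·t)^(n+2) ds = 1/(binom(n,i) · t^(i+1)), where binom(n,i) is the binomial coefficient. -/
open MeasureTheory Set Finset Nat

lemma sumT (i : ℕ) : ∀ x : ℝ, 0 < x →
    ∑ j ∈ range (i+1), (-1:ℝ)^j * (i.choose j) / (x + j)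
      = (i ! : ℝ) / ∏ j ∈ range (i+1), (x + j) := by
  induction i with
  | zero => intro x hx; simp
  | succ i ih =>
    intro x hx
    have hx1 : (0:ℝ) < x + 1 := by linarith
    have hP : (0:ℝ) < ∏ j ∈ range (i+1), (x + j) := by
      apply Finset.prod_pos; intro j hj; have : (0:ℝ) ≤ (j:ℝ) := by positivity
      linarith
    have hQ : (0:ℝ) < ∏ j ∈ range (i+1), (x + 1 + j) := by
      apply Finset.prod_pos; intro j hj; have : (0:ℝ) ≤ (j:ℝ) := by positivity
      linarith
    -- B identity
    have hB : ∑ j ∈ range (i+1), (-1:ℝ)^j * (i.choose (j+1)) / (x + 1 + j)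
        = 1/x - ∑ j ∈ range (i+1), (-1:ℝ)^j * (i.choose j) / (x + j) := by
      rw [Finset.sum_range_succ]
      simp only [Nat.choose_succ_self, Nat.cast_zero, mul_zero, zero_div, add_zero]
      rw [Finset.sum_range_succ' (fun j => (-1:ℝ)^j * (i.choose j) / (x + j)) i]
      have h1 : ∀ j ∈ range i, (-1:ℝ)^(j+1) * (i.choose (j+1)) / (x + ((j:ℕ)+1:ℕ))
          = -((-1:ℝ)^j * (i.choose (j+1)) / (x + 1 + j)) := by
        intro j hj; push_cast; ring
      rw [Finset.sum_congr rfl h1]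
      simp only [Finset.sum_neg_distrib, Nat.choose_zero_right, Nat.cast_one, pow_zero,
        one_mul, Nat.cast_zero, add_zero]
      ring
    have main : ∑ j ∈ range (i+2), (-1:ℝ)^j * ((i+1).choose j) / (x + j)
        = (∑ j ∈ range (i+1), (-1:ℝ)^j * (i.choose j) / (x + j))
          - ∑ j ∈ range (i+1), (-1:ℝ)^j * (i.choose j) / (x + 1 + j) := by
      rw [Finset.sum_range_succ'
        (fun j => (-1:ℝ)^j * ((i+1).choose j) / (x + j)) (i+1)]
      have h2 : ∀ j ∈ range (i+1), (-1:ℝ)^(j+1) * ((i+1).choose (j+1)) / (x + ((j:ℕ)+1:ℕ))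
          = (-((-1:ℝ)^j * (i.choose j) / (x + 1 + j)))
            + (-((-1:ℝ)^j * (i.choose (j+1)) / (x + 1 + j))) := by
        intro j hj
        rw [Nat.choose_succ_succ]
        push_cast
        ring
      rw [Finset.sum_congr rfl h2, Finset.sum_add_distrib]
      simp only [Finset.sum_neg_distrib]
      rw [hB]
      simp only [Nat.choose_zero_right, Nat.cast_one, pow_zero, one_mul, Nat.cast_zero,
        add_zero]
      ring
    rw [main, ih x hx, ih (x+1) hx1]
    have e1 : ∏ j ∈ range (i+2), (x + (j:ℝ))
        = (∏ j ∈ range (i+1), (x + (j:ℝ))) * (x + ((i:ℝ)+1)) := by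
      rw [Finset.prod_range_succ]; push_cast; ring
    have e2 : ∏ j ∈ range (i+2), (x + (j:ℝ))
        = (∏ j ∈ range (i+1), (x + 1 + (j:ℝ))) * x := by
      rw [Finset.prod_range_succ' (fun j => x + (j:ℝ)) (i+1)]
      simp only [Nat.cast_zero, add_zero]
      congr 1
      exact Finset.prod_congr rfl (fun j hj => by push_cast; ring)
    have key : (∏ j ∈ range (i+1), (x + 1 + (j:ℝ))) * x
        = (∏ j ∈ range (i+1), (x + (j:ℝ))) * (x + ((i:ℝ)+1)) := by
      rw [← e1, ← e2]
    have hQeq : (∏ j ∈ range (i+1), (x + 1 + (j:ℝ)))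
        = (∏ j ∈ range (i+1), (x + (j:ℝ))) * (x + ((i:ℝ)+1)) / x := by
      field_simp
      linarith [key]
    rw [show i+1+1 = i+2 from rfl, e1, hQeq, Nat.factorial_succ]
    have hxi : (0:ℝ) < x + ((i:ℝ)+1) := by positivity
    push_cast
    field_simp
    ring

lemma keysum (n i : ℕ) (hi : i ≤ n) :
    ∑ k ∈ range (i+1), (-1:ℝ)^(k+i) * (i.choose k) / ((n:ℝ)+1-k)
      = 1/(((n:ℝ)+1) * (n.choose i)) := by
  have hx : (0:ℝ) < ((n-i:ℕ):ℝ) + 1 := by positivity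
  have hreflect : ∑ k ∈ range (i+1), (-1:ℝ)^(k+i) * (i.choose k) / ((n:ℝ)+1-k)
      = ∑ j ∈ range (i+1), (-1:ℝ)^j * (i.choose j) / ((((n-i:ℕ):ℝ)+1) + j) := by
    rw [← Finset.sum_range_reflect
      (fun k => (-1:ℝ)^(k+i) * (i.choose k) / ((n:ℝ)+1-k)) (i+1)]
    refine Finset.sum_congr rfl (fun j hj => ?_)
    have hji : j ≤ i := by simp at hj; omega
    have h1 : i + 1 - 1 - j = i - j := by omega
    rw [h1]
    have h2 : (-1:ℝ)^((i-j)+i) = (-1:ℝ)^j := by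
      rw [show (i-j)+i = j + 2*(i-j) by omega, pow_add, pow_mul]
      simp
    have h3 : i.choose (i-j) = i.choose j := Nat.choose_symm hji
    rw [h2, h3]
    congr 1
    rw [Nat.cast_sub hji, Nat.cast_sub hi]
    ring
  rw [hreflect, sumT i _ hx]
  have hprodgen : ∀ (m k : ℕ), ((m ! : ℕ) : ℝ) * ∏ j ∈ range k, ((m:ℝ)+1+j) = (((m+k)! : ℕ) : ℝ) := by
    intro m k
    induction k with
    | zero => simp
    | succ k ihk =>
      rw [Finset.prod_range_succ, ← mul_assoc, ihk,
        show m + (k+1) = (m+k) + 1 from rfl, Nat.factorial_succ]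
      push_cast
      ring
  have hprod := hprodgen (n-i) (i+1)
  rw [show n-i+(i+1) = n+1 by omega] at hprod
  have hc : n.choose i * i ! * (n-i)! = n ! := Nat.choose_mul_factorial_mul_factorial hi
  have hcR : (n.choose i : ℝ) * (i ! : ℝ) * ((n-i)! : ℝ) = (n ! : ℝ) := by
    exact_mod_cast congrArg (Nat.cast (R := ℝ)) hc
  have hfR : (((n+1)! : ℕ) : ℝ) = ((n:ℝ)+1) * (n ! : ℝ) := by
    rw [Nat.factorial_succ]; push_cast; ring
  have h1 : (0:ℝ) < (n.choose i : ℝ) := by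
    exact_mod_cast Nat.choose_pos hi
  have h2 : (0:ℝ) < ((n-i)! : ℝ) := by exact_mod_cast Nat.factorial_pos _
  have h0 : (0:ℝ) < ∏ j ∈ range (i+1), ((((n-i:ℕ):ℝ)+1) + j) := by
    apply Finset.prod_pos; intro j hj; positivity
  rw [div_eq_div_iff (ne_of_gt h0) (by positivity)]
  have hiR : (0:ℝ) < (i ! : ℝ) := by exact_mod_cast Nat.factorial_pos _
  nlinarith [hprod, hcR, hfR, h0, h1, h2, hiR]

/-- For all natural numbers `n`, `i` with `i ≤ n` and every real `t > 0`,
the improper integral `∫₀^∞ sⁱ/(1+s·t)^(n+2) ds` converges and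
`(n+1) · ∫₀^∞ sⁱ/(1+s·t)^(n+2) ds = 1/(binom(n,i) · t^(i+1))`. -/
theorem beta_integral_formula (n i : ℕ) (hi : i ≤ n) (t : ℝ) (ht : 0 < t) :
    IntegrableOn (fun s : ℝ => s ^ i / (1 + s * t) ^ (n + 2)) (Ici 0) volume ∧
    (n + 1 : ℝ) * ∫ s in Ici (0 : ℝ), s ^ i / (1 + s * t) ^ (n + 2) =
      1 / ((n.choose i : ℝ) * t ^ (i + 1)) := by
  set c : ℕ → ℝ := fun k => (i.choose k : ℝ) * (-1:ℝ)^(k+i) / (t^(i+1) * ((k:ℝ) - ((n:ℝ)+1)))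
    with hc
  set F : ℝ → ℝ := fun s => ∑ k ∈ range (i+1), c k * (1 + s*t) ^ ((k:ℤ) - (n+1)) with hF
  have hkn : ∀ k, k ∈ range (i+1) → (k:ℝ) - ((n:ℝ)+1) ≠ 0 := by
    intro k hk
    simp only [Finset.mem_range] at hk
    have : (k:ℝ) ≤ n := by exact_mod_cast le_trans (Nat.lt_succ_iff.mp hk) hi
    linarith
  -- derivative
  have hderiv : ∀ x ∈ Ici (0:ℝ), HasDerivAt F (x^i/(1+x*t)^(n+2)) x := by
    intro x hx
    have hx0 : (0:ℝ) ≤ x := hx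
    have hu : (0:ℝ) < 1 + x*t := by nlinarith
    have hinner : HasDerivAt (fun s : ℝ => 1 + s*t) t x := by
      simpa using ((hasDerivAt_id x).mul_const t).const_add 1
    have hterm : ∀ k ∈ range (i+1),
        HasDerivAt (fun s => c k * (1+s*t)^((k:ℤ)-(n+1)))
          (c k * (((((k:ℤ)-(n+1)) : ℤ) : ℝ) * (1+x*t)^((k:ℤ)-(n+1)-1) * t)) x := by
      intro k _
      simpa [Function.comp] using (((hasDerivAt_zpow ((k:ℤ)-(n+1)) _ (Or.inl hu.ne')).comp x hinner).const_mul (c k))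
    have hsum := HasDerivAt.sum hterm
    have hb : ∑ k ∈ range (i+1), (-1:ℝ)^(k+i) * (1+x*t)^k * (1:ℝ)^(i-k) * (i.choose k)
        = (x*t)^i := by
      rw [← sub_pow]
      congr 1
      ring
    have heq : ∑ k ∈ range (i+1),
        c k * (((((k:ℤ)-(n+1)) : ℤ) : ℝ) * (1+x*t)^((k:ℤ)-(n+1)-1) * t)
        = x^i/(1+x*t)^(n+2) := by
      have hterm2 : ∀ k ∈ range (i+1),
          c k * (((((k:ℤ)-(n+1)) : ℤ) : ℝ) * (1+x*t)^((k:ℤ)-(n+1)-1) * t)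
          = ((-1:ℝ)^(k+i) * (1+x*t)^k * (1:ℝ)^(i-k) * (i.choose k))
              * (1 / (t^i * (1+x*t)^(n+2))) := by
        intro k hk
        have hzp : (1+x*t)^((k:ℤ)-(n+1)-1) = (1+x*t)^k / (1+x*t)^(n+2) := by
          rw [show (k:ℤ)-(n+1)-1 = (k:ℤ) - ((n:ℕ)+2 : ℕ) by push_cast; ring,
            zpow_sub₀ hu.ne', zpow_natCast, zpow_natCast]
        rw [hzp, hc]
        have hk1 := hkn k hk
        have hup : ((1+x*t)^(n+2) : ℝ) ≠ 0 := by positivity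
        have htp : (t : ℝ) ≠ 0 := ht.ne'
        push_cast
        field_simp
        ring
      rw [Finset.sum_congr rfl hterm2, ← Finset.sum_mul, hb]
      have hup : ((1+x*t)^(n+2) : ℝ) ≠ 0 := by positivity
      field_simp
      ring
    rw [← heq]
    rw [Finset.sum_fn] at hsum
    exact hsum
  -- tendsto
  have hmono : Filter.Tendsto (fun s:ℝ => 1 + s*t) Filter.atTop Filter.atTop := by
    apply Filter.tendsto_atTop_add_const_left
    exact Filter.Tendsto.atTop_mul_const ht Filter.tendsto_id
  have htend : Filter.Tendsto F Filter.atTop (nhds 0) := by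
    rw [hF]
    have : (0:ℝ) = ∑ k ∈ range (i+1), c k * 0 := by simp
    rw [this]
    apply tendsto_finset_sum
    intro k hk
    have hneg : (k:ℤ) - (n+1) < 0 := by
      simp only [Finset.mem_range] at hk
      have : (k:ℤ) ≤ n := by exact_mod_cast le_trans (Nat.lt_succ_iff.mp hk) hi
      omega
    exact ((tendsto_zpow_atTop_zero hneg).comp hmono).const_mul (c k)
  -- nonneg
  have hnonneg : ∀ x ∈ Ioi (0:ℝ), 0 ≤ x^i/(1+x*t)^(n+2) := by
    intro x hx
    have hx0 : (0:ℝ) < x := hx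
    have hu : (0:ℝ) < 1 + x*t := by nlinarith
    exact div_nonneg (pow_nonneg hx0.le i) (pow_pos hu _).le
  -- F 0
  have hF0 : F 0 = -(1/(t^(i+1) * (((n:ℝ)+1) * (n.choose i)))) := by
    rw [hF]
    simp only [zero_mul, add_zero, one_zpow, mul_one]
    have hterm3 : ∀ k ∈ range (i+1),
        c k = (-(1/t^(i+1))) * ((-1:ℝ)^(k+i) * (i.choose k) / ((n:ℝ)+1-(k:ℝ))) := by
      intro k hk
      have hk1 := hkn k hk
      rw [hc]
      have htp : (t : ℝ) ≠ 0 := ht.ne'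
      have : ((n:ℝ)+1-(k:ℝ)) ≠ 0 := by intro h; apply hk1; linarith [h]
      field_simp
      ring
    rw [Finset.sum_congr rfl hterm3, ← Finset.mul_sum, keysum n i hi]
    have hC : (0:ℝ) < (n.choose i : ℝ) := by exact_mod_cast Nat.choose_pos hi
    field_simp
  have key := integral_Ioi_of_hasDerivAt_of_nonneg' hderiv hnonneg htend
  have keyInt := integrableOn_Ioi_deriv_of_nonneg' hderiv hnonneg htend
  constructor
  · rw [integrableOn_Ici_iff_integrableOn_Ioi]
    exact keyInt
  · rw [integral_Ici_eq_integral_Ioi, key, hF0]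
    have hC : (0:ℝ) < (n.choose i : ℝ) := by exact_mod_cast Nat.choose_pos hi
    have htp : (0:ℝ) < t^(i+1) := pow_pos ht _
    field_simp
    ring
end

section
/- For every natural number n, every real number t > 0, and all real numbers c₀,…,cₙ: (n+1) · ∫₀^∞ (Σ_{i=0}^n binom(n,i)·c_{n−i}·sⁱ) · t^(n+1)/(1+s·t)^(n+2) ds = Σ_{j=0}^n c_j·t^j. -/
open MeasureTheory Set Finset Filter Topology

variable {t : ℝ}

lemma aux_tendsto (ht : 0 < t) (j : ℕ) :
    Tendsto (fun s : ℝ => ((1 + s * t) ^ (j + 1))⁻¹) atTop (𝓝 0) := by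
  apply Tendsto.inv_tendsto_atTop
  exact ((tendsto_pow_atTop j.succ_ne_zero).comp
    (tendsto_atTop_add_const_left _ 1 (tendsto_id.atTop_mul_const ht)))

lemma aux_deriv (ht : 0 < t) (j : ℕ) (s : ℝ) (hs : 0 ≤ s) :
    HasDerivAt (fun x : ℝ => -((((j : ℝ) + 1) * t)⁻¹ * ((1 + x * t) ^ (j + 1))⁻¹))
      (((1 + s * t) ^ (j + 2))⁻¹) s := by
  have hpos : 0 < 1 + s * t := by positivity
  have h0 : HasDerivAt (fun x : ℝ => 1 + x * t) t s := by
    simpa using ((hasDerivAt_id s).mul_const t).const_add 1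
  have h1 := (h0.fun_pow (j + 1)).fun_inv (pow_ne_zero _ hpos.ne')
  have h2 := (h1.const_mul ((((j : ℝ) + 1) * t)⁻¹)).fun_neg
  refine h2.congr_deriv ?_
  rw [show j + 1 - 1 = j from rfl]; push_cast
  field_simp
  ring

lemma aux_int_base (ht : 0 < t) (j : ℕ) :
    IntegrableOn (fun s : ℝ => ((1 + s * t) ^ (j + 2))⁻¹) (Ioi 0) := by
  apply integrableOn_Ioi_deriv_of_nonneg
    (g := fun x : ℝ => -((((j : ℝ) + 1) * t)⁻¹ * ((1 + x * t) ^ (j + 1))⁻¹))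
    (((aux_deriv ht j 0 le_rfl).continuousAt).continuousWithinAt)
    (fun x hx => aux_deriv ht j x (le_of_lt hx))
    (fun x hx => by have hx' : (0:ℝ) < x := hx; positivity)
  simpa using ((aux_tendsto ht j).const_mul ((((j : ℝ) + 1) * t)⁻¹)).neg

lemma aux_intble (ht : 0 < t) (i m : ℕ) (him : i ≤ m) :
    IntegrableOn (fun s : ℝ => s ^ i / (1 + s * t) ^ (m + 2)) (Ioi 0) := by
  apply Integrable.mono' ((aux_int_base ht (m - i)).const_mul ((t ^ i)⁻¹))
  · apply ContinuousOn.aestronglyMeasurable _ measurableSet_Ioi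
    apply ContinuousOn.div (continuousOn_pow i) ((continuousOn_const.add
      ((continuousOn_id).mul continuousOn_const)).pow (m + 2))
    intro x hx
    have hx' : (0:ℝ) < x := hx
    show (1 + x * t) ^ (m + 2) ≠ 0
    positivity
  · rw [ae_restrict_iff' measurableSet_Ioi]
    filter_upwards with s hs
    have hs' : (0:ℝ) < s := hs
    have hpos : 0 < 1 + s * t := by positivity
    have hsplit : (1 + s * t) ^ (m + 2) = (1 + s * t) ^ i * (1 + s * t) ^ (m - i + 2) := by
      rw [← pow_add]; congr 1; omega
    have key : s ^ i * t ^ i ≤ (1 + s * t) ^ i := by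
      rw [← mul_pow]; exact pow_le_pow_left₀ (by positivity) (by nlinarith) i
    rw [Real.norm_eq_abs, abs_of_nonneg (by positivity)]
    rw [div_le_iff₀ (by positivity), hsplit]
    have h2 : (t ^ i)⁻¹ * ((1 + s * t) ^ (m - i + 2))⁻¹ *
        ((1 + s * t) ^ i * (1 + s * t) ^ (m - i + 2)) = (1 + s * t) ^ i / t ^ i := by
      field_simp
    rw [h2, le_div_iff₀ (by positivity)]
    exact key
lemma aux_val {t : ℝ} (ht : 0 < t) :
    ∀ i m, i ≤ m → ∫ s in Ioi (0:ℝ), s ^ i / (1 + s * t) ^ (m + 2) =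
      (i.factorial * (m - i).factorial : ℝ) / ((m + 1).factorial * t ^ (i + 1)) := by
  intro i
  induction i with
  | zero =>
    intro m _
    have h := integral_Ioi_of_hasDerivAt_of_tendsto' (a := (0:ℝ))
      (fun x hx => aux_deriv ht m x hx.out)
      (by have := aux_intble ht 0 m (Nat.zero_le m); simpa [one_div] using this)
      (by simpa using ((aux_tendsto ht m).const_mul ((((m : ℝ) + 1) * t)⁻¹)).neg)
    simp only [pow_zero, mul_zero, zero_mul, mul_one, one_pow, inv_one, mul_zero] at h
    rw [show (fun s : ℝ => s ^ 0 / (1 + s * t) ^ (m + 2)) =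
      (fun s : ℝ => ((1 + s * t) ^ (m + 2))⁻¹) from funext fun s => by simp [one_div]]
    rw [h]
    simp [Nat.factorial_succ]
    field_simp
  | succ i ih =>
    intro m him
    obtain ⟨k, rfl⟩ : ∃ k, m = k + 1 := ⟨m - 1, by omega⟩
    have hik : i ≤ k := by omega
    -- G s = s^(i+1) * ((1+s*t)^(k+2))⁻¹
    set G : ℝ → ℝ := fun s => s ^ (i + 1) * ((1 + s * t) ^ (k + 2))⁻¹ with hG
    have hderiv : ∀ x ∈ Ici (0:ℝ), HasDerivAt G
        (((i:ℝ) + 1) * (x ^ i / (1 + x * t) ^ (k + 2))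
          - ((k:ℝ) + 2) * t * (x ^ (i + 1) / (1 + x * t) ^ (k + 3))) x := by
      intro x hx
      have hx0 : (0:ℝ) ≤ x := hx
      have hpos : 0 < 1 + x * t := by positivity
      have h0 : HasDerivAt (fun y : ℝ => 1 + y * t) t x := by
        simpa using ((hasDerivAt_id x).mul_const t).const_add 1
      have h1 := (h0.fun_pow (k + 2)).fun_inv (pow_ne_zero _ hpos.ne')
      have h2 := (hasDerivAt_pow (i + 1) x).fun_mul h1
      refine h2.congr_deriv ?_
      rw [show i + 1 - 1 = i from rfl, show k + 2 - 1 = k + 1 from rfl]; push_cast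
      field_simp
      ring
    have hint1 := (aux_intble ht i k hik)
    have hint1' : IntegrableOn (fun s : ℝ => s ^ i / (1 + s * t) ^ (k + 2)) (Ioi 0) := hint1
    have hint2 : IntegrableOn (fun s : ℝ => s ^ (i+1) / (1 + s * t) ^ (k + 3)) (Ioi 0) :=
      aux_intble ht (i+1) (k+1) (by omega)
    have hGint : IntegrableOn (fun x : ℝ =>
        ((i:ℝ) + 1) * (x ^ i / (1 + x * t) ^ (k + 2))
          - ((k:ℝ) + 2) * t * (x ^ (i + 1) / (1 + x * t) ^ (k + 3))) (Ioi 0) :=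
      (hint1'.const_mul _).sub (hint2.const_mul _)
    have hGtend : Tendsto G atTop (𝓝 0) := by
      apply squeeze_zero' (g := fun s : ℝ => (t ^ (i+1))⁻¹ * ((1 + s * t) ^ (k - i + 1))⁻¹)
      · filter_upwards [eventually_ge_atTop (0:ℝ)] with s hs
        have hpos : 0 < 1 + s * t := by positivity
        positivity
      · filter_upwards [eventually_ge_atTop (0:ℝ)] with s hs
        have hpos : 0 < 1 + s * t := by positivity
        have hsplit : (1 + s * t) ^ (k + 2) = (1 + s * t) ^ (i+1) * (1 + s * t) ^ (k - i + 1) := by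
          rw [← pow_add]; congr 1; omega
        have key : s ^ (i+1) * t ^ (i+1) ≤ (1 + s * t) ^ (i+1) := by
          rw [← mul_pow]; exact pow_le_pow_left₀ (by positivity) (by nlinarith) _
        show s ^ (i + 1) * ((1 + s * t) ^ (k + 2))⁻¹ ≤ _
        rw [← div_eq_mul_inv, div_le_iff₀ (by positivity), hsplit]
        have h2 : (t ^ (i+1))⁻¹ * ((1 + s * t) ^ (k - i + 1))⁻¹ *
            ((1 + s * t) ^ (i+1) * (1 + s * t) ^ (k - i + 1)) = (1 + s * t) ^ (i+1) / t ^ (i+1) := by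
          field_simp
        rw [h2, le_div_iff₀ (by positivity)]
        exact key
      · simpa using ((aux_tendsto ht (k - i)).const_mul ((t ^ (i+1))⁻¹))
    have h := integral_Ioi_of_hasDerivAt_of_tendsto' hderiv hGint hGtend
    have hG0 : G 0 = 0 := by simp [hG]
    rw [hG0, zero_sub, neg_zero] at h
    rw [integral_sub (hint1'.const_mul _) (hint2.const_mul _),
      MeasureTheory.integral_const_mul, MeasureTheory.integral_const_mul, ih k hik, sub_eq_zero] at h
    have hky : (0:ℝ) < ((k:ℝ) + 2) * t := by positivity
    have : ∫ s in Ioi (0:ℝ), s ^ (i+1) / (1 + s * t) ^ (k + 3) =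
        ((i:ℝ) + 1) * ((i.factorial * (k - i).factorial : ℝ) / ((k + 1).factorial * t ^ (i + 1)))
          / (((k:ℝ) + 2) * t) := by
      field_simp at h ⊢
      linarith [h]
    rw [show k + 1 + 2 = k + 3 from rfl, this]
    have hfk : ((k + 1 + 1).factorial : ℝ) = ((k:ℝ) + 2) * (k + 1).factorial := by
      rw [Nat.factorial_succ]; push_cast; ring
    have hfi : ((i + 1).factorial : ℝ) = ((i:ℝ) + 1) * i.factorial := by
      rw [Nat.factorial_succ]; push_cast; ring
    have hsub : k + 1 - (i + 1) = k - i := by omega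
    rw [hsub, hfk, hfi]
    field_simp
    ring

/-- For every natural number `n`, every real `t > 0`, and all reals `c₀,…,cₙ`:
`(n+1) · ∫₀^∞ (Σ_{i=0}^n binom(n,i)·c_{n−i}·sⁱ) · t^(n+1)/(1+s·t)^(n+2) ds = Σ_{j=0}^n c_j·t^j`. -/
theorem weighted_beta_integral (n : ℕ) (t : ℝ) (ht : 0 < t) (c : ℕ → ℝ) :
    (n + 1 : ℝ) * ∫ s in Ici (0 : ℝ),
        (∑ i ∈ range (n + 1), (n.choose i : ℝ) * c (n - i) * s ^ i) *
          t ^ (n + 1) / (1 + s * t) ^ (n + 2) =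
      ∑ j ∈ range (n + 1), c j * t ^ j := by
  rw [MeasureTheory.integral_Ici_eq_integral_Ioi]
  have hcong : ∀ s : ℝ,
      (∑ i ∈ range (n + 1), (n.choose i : ℝ) * c (n - i) * s ^ i) *
          t ^ (n + 1) / (1 + s * t) ^ (n + 2) =
        ∑ i ∈ range (n + 1), ((n.choose i : ℝ) * c (n - i) * t ^ (n + 1)) *
          (s ^ i / (1 + s * t) ^ (n + 2)) := by
    intro s
    rw [Finset.sum_mul, Finset.sum_div]
    exact Finset.sum_congr rfl fun i _ => by ring
  rw [MeasureTheory.integral_congr_ae (Filter.Eventually.of_forall hcong)]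
  rw [integral_finset_sum _ (fun i hi =>
    (aux_intble ht i n (by simpa using Finset.mem_range_succ_iff.mp hi)).const_mul _)]
  rw [Finset.mul_sum]
  rw [← Finset.sum_range_reflect (fun j => c j * t ^ j) (n + 1)]
  apply Finset.sum_congr rfl
  intro i hi
  have hin : i ≤ n := Finset.mem_range_succ_iff.mp hi
  rw [MeasureTheory.integral_const_mul, aux_val ht i n hin]
  have hrefl : n + 1 - 1 - i = n - i := by omega
  rw [hrefl]
  have hcf : ((n.choose i : ℝ)) * i.factorial * (n - i).factorial = n.factorial := by
    exact_mod_cast Nat.choose_mul_factorial_mul_factorial hin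
  have hfn : ((n + 1).factorial : ℝ) = ((n : ℝ) + 1) * n.factorial := by
    rw [Nat.factorial_succ]; push_cast; ring
  have hpows : t ^ (n + 1) = t ^ (n - i) * t ^ (i + 1) := by
    rw [← pow_add]; congr 1; omega
  rw [hfn, hpows]
  have hf0 : (0:ℝ) < n.factorial := by exact_mod_cast n.factorial_pos
  have hi0 : (0:ℝ) < i.factorial := by exact_mod_cast i.factorial_pos
  have hni0 : (0:ℝ) < (n-i).factorial := by exact_mod_cast (n-i).factorial_pos
  field_simp
  linear_combination c (n-i) * hcf
end

section
/- Let n be a natural number, d ≥ 0 and M ≥ 0 real numbers, and c₀,…,cₙ real numbers. Let W : [0,∞) → ℝ be a measurable function such that |W(s)| ≤ M for all s ∈ [0,d] and W(s) = Σ_{i=0}^n binom(n,i)·c_{n−i}·sⁱ for all s > d. Then there exists a constant C such that for all t ∈ (0,1], |(n+1)·∫₀^∞ W(s)·t^(n+1)/(1+s·t)^(n+2) ds − Σ_{j=0}^n c_j·t^j| ≤ C·t^(n+1); that is, the difference is O(t^(n+1)) as t → 0⁺. -/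
open MeasureTheory Set Finset Filter Topology
set_option maxHeartbeats 1600000

lemma aux_integrable (i k : ℕ) :
    IntegrableOn (fun u : ℝ => u ^ i / (1 + u) ^ (i + k + 2)) (Ioi (0:ℝ)) := by
  have hfin : (Module.finrank ℝ ℝ : ℝ) < (k + 2 : ℝ) := by
    simp only [Module.finrank_self, Nat.cast_one]
    have : (0:ℝ) ≤ k := Nat.cast_nonneg k
    linarith
  have h : Integrable (fun x : ℝ => (1 + ‖x‖) ^ (-(k + 2 : ℝ))) volume :=
    integrable_one_add_norm hfin
  refine (h.integrableOn.mono' ?_ ?_)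
  · exact (Measurable.div (measurable_id.pow_const i)
      ((measurable_const.add measurable_id).pow_const _)).aestronglyMeasurable
  · rw [ae_restrict_iff' measurableSet_Ioi]
    filter_upwards with u hu
    have h0 : (0:ℝ) < u := hu
    have h1 : (0:ℝ) < 1 + u := by linarith
    rw [Real.norm_of_nonneg h0.le]
    have hcast : (1 + u) ^ (-(k + 2 : ℝ)) = ((1 + u) ^ (k + 2 : ℕ))⁻¹ := by
      rw [Real.rpow_neg h1.le, show ((k:ℝ) + 2) = ((k + 2 : ℕ) : ℝ) by push_cast; ring, Real.rpow_natCast]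
    rw [hcast, Real.norm_of_nonneg (by positivity)]
    have : u ^ i / (1 + u) ^ (i + k + 2) ≤ (1 + u) ^ i / (1 + u) ^ (i + k + 2) := by
      gcongr
      linarith
    refine this.trans (le_of_eq ?_)
    rw [show i + k + 2 = i + (k + 2) by ring, pow_add]
    field_simp

lemma aux_tendsto_s3 (p q : ℕ) (h : p < q) :
    Tendsto (fun u : ℝ => u ^ p / (1 + u) ^ q) atTop (𝓝 0) := by
  have h1 : Tendsto (fun u : ℝ => 1 + u) atTop atTop :=
    tendsto_atTop_add_const_left _ 1 tendsto_id
  have h2 : Tendsto (fun u : ℝ => ((1 + u) ^ (q - p))⁻¹) atTop (𝓝 0) :=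
    ((tendsto_pow_atTop (Nat.sub_ne_zero_of_lt h)).comp h1).inv_tendsto_atTop
  refine squeeze_zero' ?_ ?_ h2
  · filter_upwards [eventually_ge_atTop (0:ℝ)] with u hu
    positivity
  · filter_upwards [eventually_ge_atTop (0:ℝ)] with u hu
    have h1u : (0:ℝ) < 1 + u := by linarith
    have : u ^ p / (1 + u) ^ q ≤ (1 + u) ^ p / (1 + u) ^ q := by
      gcongr; linarith
    refine this.trans (le_of_eq ?_)
    rw [show q = p + (q - p) by omega, pow_add]
    field_simp
    rw [Nat.add_sub_cancel_left]

lemma aux_J : ∀ (i k : ℕ), (∫ u in Ioi (0:ℝ), u ^ i / (1 + u) ^ (i + k + 2))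
    = (i.factorial * k.factorial : ℝ) / (i + k + 1).factorial := by
  intro i
  induction i with
  | zero =>
    intro k
    have h1x : ∀ x : ℝ, x ∈ Ici (0:ℝ) → (0:ℝ) < 1 + x := fun x hx => by
      have hx' : (0:ℝ) ≤ x := hx; linarith
    set F : ℝ → ℝ := fun u => -(((k:ℝ) + 1)⁻¹ * ((1 + u) ^ (k + 1))⁻¹) with hF
    have hderiv : ∀ x ∈ Ici (0:ℝ), HasDerivAt F (x ^ 0 / (1 + x) ^ (0 + k + 2)) x := by
      intro x hx
      have h1 : (0:ℝ) < 1 + x := h1x x hx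
      have hne : (1 + x) ^ (k + 1) ≠ 0 := by positivity
      have hp : HasDerivAt (fun u : ℝ => (1 + u) ^ (k + 1))
          (((k:ℕ) + 1 : ℕ) * (1 + x) ^ (k + 1 - 1) * 1) x :=
        ((hasDerivAt_id x).const_add 1).pow (k + 1)
      have hi := (hp.inv hne).const_mul (((k:ℝ) + 1)⁻¹)
      have := hi.neg
      refine this.congr_deriv ?_
      simp only [Nat.add_sub_cancel]
      push_cast
      field_simp
      ring
    have htend : Tendsto F atTop (𝓝 0) := by
      have h1 : Tendsto (fun u : ℝ => 1 + u) atTop atTop :=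
        tendsto_atTop_add_const_left _ 1 tendsto_id
      have h2 : Tendsto (fun u : ℝ => ((1 + u) ^ (k + 1))⁻¹) atTop (𝓝 0) :=
        ((tendsto_pow_atTop (Nat.succ_ne_zero k)).comp h1).inv_tendsto_atTop
      have := (h2.const_mul (((k:ℝ) + 1)⁻¹)).neg
      simpa using this
    rw [integral_Ioi_of_hasDerivAt_of_tendsto' hderiv
      (by simpa using aux_integrable 0 k) htend]
    have hF0 : F 0 = -((k:ℝ) + 1)⁻¹ := by simp [hF]
    rw [hF0, zero_sub, neg_neg]
    have hk : ((k:ℝ) + 1) ≠ 0 := by positivity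
    have hkf : ((k.factorial : ℝ)) ≠ 0 := Nat.cast_ne_zero.mpr (Nat.factorial_ne_zero _)
    rw [Nat.factorial_zero, show 0 + k + 1 = k + 1 by ring, Nat.factorial_succ]
    push_cast
    field_simp
  | succ i ih =>
    intro k
    have h1x : ∀ x : ℝ, x ∈ Ici (0:ℝ) → (0:ℝ) < 1 + x := fun x hx => by
      have hx' : (0:ℝ) ≤ x := hx; linarith
    set m := i + k + 3 with hm
    set F : ℝ → ℝ := fun u => -(((i:ℝ) + k + 2)⁻¹ * (u ^ (i + 1) * ((1 + u) ^ (i + k + 2))⁻¹)) with hF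
    set f' : ℝ → ℝ := fun x => x ^ (i + 1) / (1 + x) ^ m
      - ((i:ℝ) + 1) / ((i:ℝ) + k + 2) * (x ^ i / (1 + x) ^ (i + k + 2)) with hf'
    have hint1 : IntegrableOn (fun x : ℝ => x ^ (i + 1) / (1 + x) ^ m) (Ioi 0) := by
      have := aux_integrable (i + 1) k
      simpa [hm, show i + 1 + k + 2 = i + k + 3 by ring] using this
    have hint2 : IntegrableOn f' (Ioi 0) :=
      hint1.sub ((aux_integrable i k).const_mul _)
    have hderiv : ∀ x ∈ Ici (0:ℝ), HasDerivAt F (f' x) x := by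
      intro x hx
      have h1 : (0:ℝ) < 1 + x := h1x x hx
      have hne : (1 + x) ^ (i + k + 2) ≠ 0 := by positivity
      have hp : HasDerivAt (fun u : ℝ => u ^ (i + 1)) ((i + 1 : ℕ) * x ^ (i + 1 - 1)) x :=
        hasDerivAt_pow (i + 1) x
      have hq : HasDerivAt (fun u : ℝ => (1 + u) ^ (i + k + 2))
          (((i + k + 2 : ℕ)) * (1 + x) ^ (i + k + 2 - 1) * 1) x :=
        ((hasDerivAt_id x).const_add 1).pow (i + k + 2)
      have hmul := hp.mul (hq.inv hne)
      have := (hmul.const_mul (((i:ℝ) + k + 2)⁻¹)).neg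
      refine this.congr_deriv ?_
      simp only [hf', hm, Nat.add_sub_cancel, Pi.inv_apply, show i + k + 2 - 1 = i + k + 1 from rfl, mul_one]
      push_cast
      have hne2 : ((i:ℝ) + k + 2) ≠ 0 := by positivity
      field_simp
      ring
    have htend : Tendsto F atTop (𝓝 0) := by
      have h2 : Tendsto (fun u : ℝ => u ^ (i + 1) * ((1 + u) ^ (i + k + 2))⁻¹) atTop (𝓝 0) := by
        have := aux_tendsto_s3 (i + 1) (i + k + 2) (by omega)
        simpa [div_eq_mul_inv] using this
      have h3 := (h2.const_mul (((i:ℝ) + k + 2)⁻¹)).neg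
      simpa using h3
    have hFTC := integral_Ioi_of_hasDerivAt_of_tendsto' hderiv hint2 htend
    have hF0 : F 0 = 0 := by simp [hF]
    rw [hF0, sub_zero] at hFTC
    have hsplit : (∫ x in Ioi (0:ℝ), f' x)
        = (∫ x in Ioi (0:ℝ), x ^ (i + 1) / (1 + x) ^ m)
          - ((i:ℝ) + 1) / ((i:ℝ) + k + 2) * ∫ x in Ioi (0:ℝ), x ^ i / (1 + x) ^ (i + k + 2) := by
      rw [integral_sub hint1 ((aux_integrable i k).const_mul _)]
      congr 1
      exact integral_const_mul _ _
    rw [hFTC] at hsplit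
    have hval : (∫ x in Ioi (0:ℝ), x ^ (i + 1) / (1 + x) ^ m)
        = ((i:ℝ) + 1) / ((i:ℝ) + k + 2) * ((i.factorial * k.factorial : ℝ) / (i + k + 1).factorial) := by
      rw [← ih k]
      linarith [hsplit]
    have hgoal : (∫ u in Ioi (0:ℝ), u ^ (i + 1) / (1 + u) ^ (i + 1 + k + 2))
        = (∫ x in Ioi (0:ℝ), x ^ (i + 1) / (1 + x) ^ m) := by
      rw [hm, show i + 1 + k + 2 = i + k + 3 by ring]
    rw [hgoal, hval]
    rw [Nat.factorial_succ i, show i + 1 + k + 1 = (i + k + 1) + 1 by ring,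
      Nat.factorial_succ (i + k + 1)]
    have h1 : ((i + k + 1).factorial : ℝ) ≠ 0 := Nat.cast_ne_zero.mpr (Nat.factorial_ne_zero _)
    have h2 : ((i:ℝ) + k + 2) ≠ 0 := by positivity
    push_cast [-Nat.cast_ofNat]
    field_simp
    ring

lemma aux_integrable_t (i k : ℕ) {t : ℝ} (ht : 0 < t) :
    IntegrableOn (fun s : ℝ => s ^ i / (1 + s * t) ^ (i + k + 2)) (Ioi (0:ℝ)) := by
  have h : IntegrableOn (fun s : ℝ => (s * t) ^ i / (1 + s * t) ^ (i + k + 2)) (Ioi (0:ℝ)) := by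
    refine (integrableOn_Ioi_comp_mul_right_iff
      (fun u : ℝ => u ^ i / (1 + u) ^ (i + k + 2)) 0 ht).2 ?_
    simpa using aux_integrable i k
  refine IntegrableOn.congr_fun (h.const_mul ((t ^ i)⁻¹)) (fun s _ => ?_) measurableSet_Ioi
  rw [mul_pow]
  field_simp

lemma aux_J_t (i k : ℕ) {t : ℝ} (ht : 0 < t) :
    (∫ s in Ioi (0:ℝ), s ^ i / (1 + s * t) ^ (i + k + 2))
      = (i.factorial * k.factorial : ℝ) / (i + k + 1).factorial / t ^ (i + 1) := by
  have h := integral_comp_mul_right_Ioi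
    (fun u : ℝ => u ^ i / (1 + u) ^ (i + k + 2)) 0 ht
  simp only [zero_mul] at h
  have hne : (t : ℝ) ≠ 0 := ht.ne'
  have step : (∫ s in Ioi (0:ℝ), s ^ i / (1 + s * t) ^ (i + k + 2))
      = (t ^ i)⁻¹ * ∫ s in Ioi (0:ℝ), (s * t) ^ i / (1 + s * t) ^ (i + k + 2) := by
    rw [← integral_const_mul]
    congr 1
    funext s
    rw [mul_pow]
    field_simp
  rw [step, h, aux_J i k, smul_eq_mul, pow_succ]
  field_simp

lemma poly_int (n : ℕ) (c : ℕ → ℝ) {t : ℝ} (ht : 0 < t) :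
    (n + 1 : ℝ) * (∫ s in Ioi (0:ℝ),
        (∑ i ∈ range (n + 1), (n.choose i : ℝ) * c (n - i) * s ^ i) * t ^ (n + 1)
          / (1 + s * t) ^ (n + 2))
      = ∑ j ∈ range (n + 1), c j * t ^ j := by
  have hne : (t : ℝ) ≠ 0 := ht.ne'
  have hrw : ∀ s : ℝ,
      (∑ i ∈ range (n + 1), (n.choose i : ℝ) * c (n - i) * s ^ i) * t ^ (n + 1)
          / (1 + s * t) ^ (n + 2)
      = ∑ i ∈ range (n + 1),
          ((n.choose i : ℝ) * c (n - i) * t ^ (n + 1)) * (s ^ i / (1 + s * t) ^ (n + 2)) := by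
    intro s
    rw [sum_mul, sum_div]
    congr 1; funext i; ring
  have hint : ∀ i ∈ range (n + 1),
      IntegrableOn (fun s : ℝ =>
        ((n.choose i : ℝ) * c (n - i) * t ^ (n + 1)) * (s ^ i / (1 + s * t) ^ (n + 2)))
        (Ioi (0:ℝ)) := by
    intro i hi
    have hi' : i ≤ n := by simp at hi; omega
    have := (aux_integrable_t i (n - i) ht).const_mul ((n.choose i : ℝ) * c (n - i) * t ^ (n + 1))
    simpa [IntegrableOn, show i + (n - i) + 2 = n + 2 by omega] using this
  have : (∫ s in Ioi (0:ℝ),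
        (∑ i ∈ range (n + 1), (n.choose i : ℝ) * c (n - i) * s ^ i) * t ^ (n + 1)
          / (1 + s * t) ^ (n + 2))
      = ∑ i ∈ range (n + 1), ∫ s in Ioi (0:ℝ),
          ((n.choose i : ℝ) * c (n - i) * t ^ (n + 1)) * (s ^ i / (1 + s * t) ^ (n + 2)) := by
    rw [← integral_finset_sum _ hint]
    congr 1; funext s; exact hrw s
  rw [this, mul_sum]
  rw [show (∑ j ∈ range (n + 1), c j * t ^ j)
      = ∑ i ∈ range (n + 1), c (n - i) * t ^ (n - i) by
    rw [← Finset.sum_range_reflect (fun j => c j * t ^ j) (n + 1)]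
    simp]
  refine Finset.sum_congr rfl (fun i hi => ?_)
  have hi' : i ≤ n := by simp at hi; omega
  rw [integral_const_mul, show n + 2 = i + (n - i) + 2 by omega, aux_J_t i (n - i) ht]
  have hfact : ((n.choose i : ℝ) * (i.factorial * (n - i).factorial)) = n.factorial := by
    rw [← Nat.cast_mul, ← Nat.cast_mul, ← mul_assoc,
      Nat.choose_mul_factorial_mul_factorial hi']
  have h2 : i + (n - i) + 1 = n + 1 := by omega
  rw [h2, Nat.factorial_succ n]
  have h3 : t ^ (n + 1) = t ^ (i + 1) * t ^ (n - i) := by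
    rw [← pow_add]; congr 1; omega
  have hnfac : ((n.factorial : ℝ)) ≠ 0 := Nat.cast_ne_zero.mpr (Nat.factorial_ne_zero _)
  have hti : (t : ℝ) ^ (i + 1) ≠ 0 := pow_ne_zero _ hne
  have hn1 : ((n : ℝ) + 1) ≠ 0 := by positivity
  rw [h3]
  push_cast
  field_simp
  linear_combination c (n - i) * hfact

/-- If `W` is measurable, `|W s| ≤ M` on `[0,d]` and
`W s = Σ_{i=0}^n binom(n,i)·c_{n−i}·sⁱ` for `s > d`, then
`(n+1)·∫₀^∞ W(s)·t^(n+1)/(1+s·t)^(n+2) ds − Σ_{j=0}^n c_j·t^j` is `O(t^(n+1))`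
as `t → 0⁺`, in the explicit sense that it is bounded by `C·t^(n+1)` on `(0,1]`. -/
theorem integral_asymptotic_expansion (n : ℕ) (d M : ℝ) (hd : 0 ≤ d) (hM : 0 ≤ M)
    (c : ℕ → ℝ) (W : ℝ → ℝ) (hW : Measurable W)
    (hWbdd : ∀ s ∈ Icc (0 : ℝ) d, |W s| ≤ M)
    (hWpoly : ∀ s : ℝ, d < s →
      W s = ∑ i ∈ range (n + 1), (n.choose i : ℝ) * c (n - i) * s ^ i) :
    ∃ C : ℝ, ∀ t ∈ Ioc (0 : ℝ) 1,
      |(n + 1 : ℝ) * (∫ s in Ici (0 : ℝ), W s * t ^ (n + 1) / (1 + s * t) ^ (n + 2)) -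
          ∑ j ∈ range (n + 1), c j * t ^ j| ≤ C * t ^ (n + 1) := by
  classical
  set p : ℝ → ℝ := fun s => ∑ i ∈ range (n + 1), (n.choose i : ℝ) * c (n - i) * s ^ i with hp
  have hpmeas : Measurable p := by
    apply Finset.measurable_sum
    intro i _
    exact (measurable_id.pow_const i).const_mul _
  set B : ℝ := ∑ i ∈ range (n + 1), (n.choose i : ℝ) * |c (n - i)| * d ^ i with hB
  have hB0 : 0 ≤ B := by
    apply Finset.sum_nonneg
    intro i _
    have : (0:ℝ) ≤ d ^ i := pow_nonneg hd i
    positivity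
  have hpB : ∀ s ∈ Icc (0:ℝ) d, |p s| ≤ B := by
    intro s hs
    refine (Finset.abs_sum_le_sum_abs _ _).trans ?_
    refine Finset.sum_le_sum (fun i _ => ?_)
    rw [abs_mul, abs_mul, abs_pow, Nat.abs_cast, abs_of_nonneg hs.1]
    have : s ^ i ≤ d ^ i := pow_le_pow_left₀ hs.1 hs.2 i
    have h1 : (0:ℝ) ≤ (n.choose i : ℝ) * |c (n - i)| := by positivity
    exact mul_le_mul_of_nonneg_left this h1
  refine ⟨(n + 1 : ℝ) * ((M + B) * d), ?_⟩
  rintro t ⟨ht, ht1⟩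
  have hker : ∀ s : ℝ, 0 ≤ s → (1:ℝ) ≤ (1 + s * t) ^ (n + 2) := by
    intro s hs
    have h1 : (1:ℝ) ≤ 1 + s * t := by nlinarith
    exact one_le_pow₀ h1
  have hkerpos : ∀ s : ℝ, 0 ≤ s → (0:ℝ) < (1 + s * t) ^ (n + 2) := by
    intro s hs
    have : (0:ℝ) < 1 + s * t := by nlinarith
    positivity
  set g : ℝ → ℝ := fun s => (W s - p s) * t ^ (n + 1) / (1 + s * t) ^ (n + 2) with hg
  have hgmeas : Measurable g := by
    exact ((hW.sub hpmeas).mul measurable_const).div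
      ((measurable_const.add (measurable_id.mul_const t)).pow_const _)
  have hgbound : ∀ s ∈ Ioc (0:ℝ) d, ‖g s‖ ≤ (M + B) * t ^ (n + 1) := by
    intro s hs
    have hs0 : (0:ℝ) ≤ s := hs.1.le
    have h1 : |W s - p s| ≤ M + B := by
      refine (abs_sub _ _).trans ?_
      have := hWbdd s ⟨hs0, hs.2⟩
      have := hpB s ⟨hs0, hs.2⟩
      linarith
    have hkp := hkerpos s hs0
    have hk1 := hker s hs0
    rw [Real.norm_eq_abs, hg]
    rw [abs_div, abs_mul, abs_of_nonneg (pow_nonneg ht.le _),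
      abs_of_pos hkp]
    calc |W s - p s| * t ^ (n + 1) / (1 + s * t) ^ (n + 2)
        ≤ |W s - p s| * t ^ (n + 1) / 1 := by
          exact div_le_div_of_nonneg_left (by positivity) one_pos hk1
      _ = |W s - p s| * t ^ (n + 1) := by ring
      _ ≤ (M + B) * t ^ (n + 1) :=
          mul_le_mul_of_nonneg_right h1 (pow_nonneg ht.le _)
  have hg_Ioc : IntegrableOn g (Ioc 0 d) := by
    refine Measure.integrableOn_of_bounded (M := (M + B) * t ^ (n + 1))
      (by simp [measure_Ioc_lt_top.ne]) hgmeas.aestronglyMeasurable ?_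
    rw [ae_restrict_iff' measurableSet_Ioc]
    filter_upwards with s hs
    exact hgbound s hs
  have hg_Ioi_d : IntegrableOn g (Ioi d) := by
    refine IntegrableOn.congr_fun (integrableOn_zero) (fun s hs => ?_) measurableSet_Ioi
    have : W s = p s := hWpoly s hs
    simp [hg, this]
  have hg_int : IntegrableOn g (Ioi 0) := by
    rw [← Ioc_union_Ioi_eq_Ioi hd]
    exact hg_Ioc.union hg_Ioi_d
  have hint_terms : ∀ i ∈ range (n + 1),
      IntegrableOn (fun s : ℝ =>
        ((n.choose i : ℝ) * c (n - i) * t ^ (n + 1)) * (s ^ i / (1 + s * t) ^ (n + 2)))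
        (Ioi (0:ℝ)) := by
    intro i hi
    have hi' : i ≤ n := by simp at hi; omega
    have := (aux_integrable_t i (n - i) ht).const_mul
      ((n.choose i : ℝ) * c (n - i) * t ^ (n + 1))
    simpa [IntegrableOn, show i + (n - i) + 2 = n + 2 by omega] using this
  have hint_p : IntegrableOn (fun s => p s * t ^ (n + 1) / (1 + s * t) ^ (n + 2)) (Ioi 0) := by
    refine IntegrableOn.congr_fun (integrable_finset_sum _ hint_terms) (fun s _ => ?_)
      measurableSet_Ioi
    rw [hp]
    rw [sum_mul, sum_div]
    congr 1; funext i; ring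
  have hsplit : (∫ s in Ioi (0:ℝ), W s * t ^ (n + 1) / (1 + s * t) ^ (n + 2))
      = (∫ s in Ioi (0:ℝ), g s)
        + ∫ s in Ioi (0:ℝ), p s * t ^ (n + 1) / (1 + s * t) ^ (n + 2) := by
    rw [← integral_add hg_int hint_p]
    congr 1; funext s
    rw [hg]; ring
  have hpoly := poly_int n c ht
  rw [integral_Ici_eq_integral_Ioi, hsplit]
  have heq : (n + 1 : ℝ) * ((∫ s in Ioi (0:ℝ), g s)
        + ∫ s in Ioi (0:ℝ), p s * t ^ (n + 1) / (1 + s * t) ^ (n + 2))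
      - ∑ j ∈ range (n + 1), c j * t ^ j
      = (n + 1 : ℝ) * ∫ s in Ioi (0:ℝ), g s := by
    rw [mul_add]
    rw [hp] at *
    linarith [hpoly]
  rw [heq]
  have hIg : |∫ s in Ioi (0:ℝ), g s| ≤ (M + B) * t ^ (n + 1) * d := by
    rw [← Ioc_union_Ioi_eq_Ioi hd,
      setIntegral_union (Ioc_disjoint_Ioi le_rfl) measurableSet_Ioi hg_Ioc hg_Ioi_d]
    have hz : (∫ s in Ioi d, g s) = 0 := by
      apply setIntegral_eq_zero_of_forall_eq_zero
      intro s hs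
      have : W s = p s := hWpoly s hs
      simp [hg, this]
    rw [hz, add_zero]
    have := norm_setIntegral_le_of_norm_le_const (μ := volume) (s := Ioc (0:ℝ) d)
      (f := g) (C := (M + B) * t ^ (n + 1)) measure_Ioc_lt_top hgbound
    rw [Real.volume_real_Ioc, max_eq_left (by linarith)] at this
    simpa using this.trans (le_of_eq (by ring))
  rw [abs_mul, abs_of_nonneg (by positivity : (0:ℝ) ≤ (n + 1 : ℝ))]
  calc ((n:ℝ) + 1) * |∫ s in Ioi (0:ℝ), g s|
      ≤ ((n:ℝ) + 1) * ((M + B) * t ^ (n + 1) * d) :=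
        mul_le_mul_of_nonneg_left hIg (by positivity)
    _ = (n + 1 : ℝ) * ((M + B) * d) * t ^ (n + 1) := by ring
end

section
/- Let I ⊆ ℂ[x₀,…,xₙ] be a homogeneous ideal generated by homogeneous polynomials of degree at most d. Then for all integers a ≥ 1, b ≥ d·a, and c ≥ 1, the c-fold subspace power of the degree-b component of I^a equals the degree-(b·c) component of I^(a·c): ((I^a)_b)^c = (I^(a·c))_(b·c). -/
open MvPolynomial Pointwise

/-- The degree-`s` homogeneous component of an ideal `I ⊆ ℂ[x₀,…,xₙ]`,
as a `ℂ`-subspace of the polynomial ring. -/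
noncomputable def idealComponent {n : ℕ} (I : Ideal (MvPolynomial (Fin (n + 1)) ℂ)) (s : ℕ) :
    Submodule ℂ (MvPolynomial (Fin (n + 1)) ℂ) :=
  I.restrictScalars ℂ ⊓ homogeneousSubmodule (Fin (n + 1)) ℂ s

lemma mem_idealComponent {n : ℕ} {I : Ideal (MvPolynomial (Fin (n + 1)) ℂ)} {s : ℕ}
    {f : MvPolynomial (Fin (n + 1)) ℂ} :
    f ∈ idealComponent I s ↔ f ∈ I ∧ f.IsHomogeneous s := by
  simp [idealComponent, Submodule.mem_inf, mem_homogeneousSubmodule]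

lemma my_degree_add {σ : Type*} (a b : σ →₀ ℕ) :
    (a + b).degree = a.degree + b.degree := by
  simp only [Finsupp.degree_eq_weight_one]
  exact map_add _ a b

lemma my_degree_single {σ : Type*} (i : σ) : (Finsupp.single i 1).degree = 1 := by
  exact Finsupp.degree_single i 1

/-- Split off a sub-finsupp of prescribed degree. -/
lemma exists_le_degree_eq {σ : Type*} (μ : σ →₀ ℕ) :
    ∀ t, t ≤ μ.degree → ∃ ν, ν ≤ μ ∧ ν.degree = t := by
  intro t
  induction t with
  | zero => exact fun _ => ⟨0, zero_le, map_zero _⟩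
  | succ t ih =>
    intro h
    obtain ⟨ν, hle, hdeg⟩ := ih (by omega)
    have hne : ν ≠ μ := by rintro rfl; omega
    have hlept : ∀ j, ν j ≤ μ j := fun j => hle j
    obtain ⟨i, hi⟩ : ∃ i, ν i < μ i := by
      by_contra hcon
      push_neg at hcon
      exact hne (le_antisymm hle fun j => hcon j)
    refine ⟨ν + Finsupp.single i 1, ?_, ?_⟩
    · intro j
      rcases eq_or_ne j i with rfl | hji
      · simpa using hi
      · simpa [Finsupp.single_apply, hji.symm] using hlept j
    · rw [my_degree_add, my_degree_single, hdeg]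

/-- Homogeneous component of a product with a homogeneous polynomial. -/
lemma hcomp_mul {σ : Type*} {p : MvPolynomial σ ℂ} (r : MvPolynomial σ ℂ) {e N : ℕ}
    (hp : p.IsHomogeneous e) (he : e ≤ N) :
    homogeneousComponent N (r * p) = homogeneousComponent (N - e) r * p := by
  nth_rewrite 1 [← sum_homogeneousComponent r]
  rw [Finset.sum_mul, map_sum]
  have key : ∀ i, homogeneousComponent N (homogeneousComponent i r * p)
      = if i = N - e then homogeneousComponent i r * p else 0 := by
    intro i
    have h1 : (homogeneousComponent i r * p).IsHomogeneous (i + e) :=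
      (homogeneousComponent_isHomogeneous i r).mul hp
    rw [homogeneousComponent_of_mem h1]
    have : (N = i + e) ↔ (i = N - e) := by omega
    rw [if_congr this rfl rfl]
  rw [Finset.sum_congr rfl fun i _ => key i,
    Finset.sum_ite_eq' (Finset.range _) (N - e) (fun i => homogeneousComponent i r * p)]
  split_ifs with hmem
  · rfl
  · rw [homogeneousComponent_eq_zero, zero_mul]
    have := Finset.mem_range.not.mp hmem
    omega

section Main

variable {n d : ℕ} {S : Set (MvPolynomial (Fin (n + 1)) ℂ)}

/-- Generators: products of `m` elements of `S` times a monomial, total degree `N`. -/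
def genSet (S : Set (MvPolynomial (Fin (n + 1)) ℂ)) (d m N : ℕ) :
    Set (MvPolynomial (Fin (n + 1)) ℂ) :=
  {f | ∃ (g : Fin m → MvPolynomial (Fin (n + 1)) ℂ) (e : Fin m → ℕ) (μ : Fin (n + 1) →₀ ℕ),
    (∀ i, g i ∈ S) ∧ (∀ i, (g i).IsHomogeneous (e i)) ∧ (∀ i, e i ≤ d) ∧
    (∑ i, e i) + μ.degree = N ∧ f = (∏ i, g i) * monomial μ 1}

lemma genSet_subset (hS : ∀ f ∈ S, ∃ e ≤ d, f.IsHomogeneous e) (m N : ℕ) :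
    genSet S d m N ⊆ idealComponent (Ideal.span S ^ m) N := by
  rintro f ⟨g, e, μ, hgS, hge, hed, hsum, rfl⟩
  rw [SetLike.mem_coe, mem_idealComponent]
  constructor
  · apply Ideal.mul_mem_right
    rw [show (Ideal.span S) ^ m = Ideal.span (S ^ m) from Submodule.span_pow S m]
    apply Ideal.subset_span
    rw [Set.mem_pow]
    exact ⟨fun i => ⟨g i, hgS i⟩, by simp [List.prod_ofFn]⟩
  · have h1 : (∏ i, g i).IsHomogeneous (∑ i, e i) :=
      IsHomogeneous.prod _ _ _ fun i _ => hge i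
    have h2 : (monomial μ (1 : ℂ)).IsHomogeneous μ.degree := isHomogeneous_monomial _ rfl
    simpa [hsum] using h1.mul h2

/-- Key spanning lemma: the degree-`N` component of `(span S)^m` is spanned by `genSet`. -/
lemma component_le_span (hS : ∀ f ∈ S, ∃ e ≤ d, f.IsHomogeneous e) {m N : ℕ} (hN : d * m ≤ N) :
    idealComponent (Ideal.span S ^ m) N ≤ Submodule.span ℂ (genSet S d m N) := by
  rintro f hf
  rw [mem_idealComponent] at hf
  obtain ⟨hfI, hfH⟩ := hf
  rw [show (Ideal.span S) ^ m = Ideal.span (S ^ m) from Submodule.span_pow S m] at hfI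
  obtain ⟨cf, hsupp, hsum⟩ := Submodule.mem_span_set.mp hfI
  have hf_eq : f = homogeneousComponent N f := by
    rw [homogeneousComponent_of_mem hfH, if_pos rfl]
  rw [hf_eq, ← hsum, Finsupp.sum, map_sum]
  apply Submodule.sum_mem
  intro p hp
  -- p ∈ S ^ m : it is a product of m elements of S
  have hpS : p ∈ S ^ m := hsupp hp
  rw [Set.mem_pow] at hpS
  obtain ⟨g, hg⟩ := hpS
  rw [List.prod_ofFn] at hg
  -- degrees of the factors
  choose e hed hge using fun i => hS (g i) (g i).2
  have hprod : p.IsHomogeneous (∑ i, e i) := by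
    rw [← hg]; exact IsHomogeneous.prod _ _ _ fun i _ => hge i
  have hE : (∑ i, e i) ≤ N := by
    calc (∑ i, e i) ≤ ∑ _i : Fin m, d := Finset.sum_le_sum fun i _ => hed i
    _ = d * m := by simp [mul_comm]
    _ ≤ N := hN
  rw [smul_eq_mul, hcomp_mul (cf p) hprod hE]
  set h := homogeneousComponent (N - ∑ i, e i) (cf p) with hh_def
  have hh : h.IsHomogeneous (N - ∑ i, e i) := homogeneousComponent_isHomogeneous _ _
  rw [as_sum h, Finset.sum_mul]
  apply Submodule.sum_mem
  intro μ hμ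
  have hμdeg : μ.degree = N - ∑ i, e i := by
    rw [Finsupp.degree_eq_weight_one]
    exact hh (mem_support_iff.mp hμ)
  have : (monomial μ (coeff μ h) : MvPolynomial (Fin (n + 1)) ℂ) * p
      = coeff μ h • (p * monomial μ 1) := by
    rw [smul_eq_C_mul, mul_left_comm, C_mul_monomial, mul_one, mul_comm]
  rw [this]
  apply Submodule.smul_mem
  apply Submodule.subset_span
  exact ⟨fun i => g i, e, μ, fun i => (g i).2, hge, hed, by omega, by rw [hg]⟩

/-- Easy direction: products of components lie in the component of the product. -/
lemma mul_component_le (I : Ideal (MvPolynomial (Fin (n + 1)) ℂ)) (p q p' q' : ℕ) :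
    idealComponent (I ^ p) q * idealComponent (I ^ p') q'
      ≤ idealComponent (I ^ (p + p')) (q + q') := by
  rw [Submodule.mul_le]
  intro x hx y hy
  rw [mem_idealComponent] at hx hy ⊢
  refine ⟨?_, hx.2.mul hy.2⟩
  rw [pow_add]
  exact Ideal.mul_mem_mul hx.1 hy.1

/-- Hard direction. -/
lemma component_le_mul (hS : ∀ f ∈ S, ∃ e ≤ d, f.IsHomogeneous e)
    {a b a' b' : ℕ} (hb : d * a ≤ b) (hb' : d * a' ≤ b') :
    idealComponent (Ideal.span S ^ (a + a')) (b + b')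
      ≤ idealComponent (Ideal.span S ^ a) b * idealComponent (Ideal.span S ^ a') b' := by
  refine le_trans (component_le_span hS (by rw [Nat.mul_add]; omega)) ?_
  rw [Submodule.span_le]
  rintro f ⟨g, e, μ, hgS, hge, hed, hsum, rfl⟩
  set E₁ := ∑ i : Fin a, e (Fin.castAdd a' i) with hE₁
  set E₂ := ∑ i : Fin a', e (Fin.natAdd a i) with hE₂
  have hEsplit : (∑ i, e i) = E₁ + E₂ := Fin.sum_univ_add e
  have hE₁le : E₁ ≤ d * a := by
    calc E₁ ≤ ∑ _i : Fin a, d := Finset.sum_le_sum fun i _ => hed _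
    _ = d * a := by simp [mul_comm]
  have hE₂le : E₂ ≤ d * a' := by
    calc E₂ ≤ ∑ _i : Fin a', d := Finset.sum_le_sum fun i _ => hed _
    _ = d * a' := by simp [mul_comm]
  obtain ⟨ν, hνle, hνdeg⟩ := exists_le_degree_eq μ (b - E₁) (by omega)
  have hμν : μ = ν + (μ - ν) := (add_tsub_cancel_of_le hνle).symm
  have hρdeg : (μ - ν).degree = b' - E₂ := by
    have := my_degree_add ν (μ - ν)
    rw [← hμν] at this
    omega
  have key : (∏ i, g i) * monomial μ (1 : ℂ)
      = ((∏ i : Fin a, g (Fin.castAdd a' i)) * monomial ν 1)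
        * ((∏ i : Fin a', g (Fin.natAdd a i)) * monomial (μ - ν) 1) := by
    rw [Fin.prod_univ_add (fun i => g i)]
    nth_rewrite 1 [hμν]
    rw [mul_mul_mul_comm, monomial_mul, one_mul]
  rw [key]
  apply Submodule.mul_mem_mul
  · apply genSet_subset hS a b
    refine ⟨fun i => g (Fin.castAdd a' i), fun i => e (Fin.castAdd a' i), ν,
      fun i => hgS _, fun i => hge _, fun i => hed _, ?_, rfl⟩
    show (∑ i : Fin a, e (Fin.castAdd a' i)) + ν.degree = b
    omega
  · apply genSet_subset hS a' b'
    refine ⟨fun i => g (Fin.natAdd a i), fun i => e (Fin.natAdd a i), μ - ν,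
      fun i => hgS _, fun i => hge _, fun i => hed _, ?_, rfl⟩
    show (∑ i : Fin a', e (Fin.natAdd a i)) + (μ - ν).degree = b'
    omega

end Main

/-- If `I ⊆ ℂ[x₀,…,xₙ]` is a homogeneous ideal generated by homogeneous
polynomials of degree at most `d`, then for all integers `a ≥ 1`, `b ≥ d·a`, `c ≥ 1`:
`((I^a)_b)^c = (I^(a·c))_(b·c)`. -/
theorem ideal_component_power (n d : ℕ) (I : Ideal (MvPolynomial (Fin (n + 1)) ℂ))
    (hI : ∃ S : Set (MvPolynomial (Fin (n + 1)) ℂ),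
      (∀ f ∈ S, ∃ e ≤ d, f.IsHomogeneous e) ∧ I = Ideal.span S)
    (a b c : ℕ) (ha : 1 ≤ a) (hb : d * a ≤ b) (hc : 1 ≤ c) :
    (idealComponent (I ^ a) b) ^ c = idealComponent (I ^ (a * c)) (b * c) := by
  obtain ⟨S, hS, rfl⟩ := hI
  induction c, hc using Nat.le_induction with
  | base => simp
  | succ c hc ih =>
    rw [pow_succ, ih]
    apply le_antisymm
    · have := mul_component_le (Ideal.span S) (a * c) (b * c) a b
      rwa [show a * c + a = a * (c + 1) by ring, show b * c + b = b * (c + 1) by ring] at this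
    · have := component_le_mul hS (a := a * c) (b := b * c) (a' := a) (b' := b)
        (by calc d * (a * c) = d * a * c := by ring
                 _ ≤ b * c := Nat.mul_le_mul_right c hb) hb
      rwa [show a * c + a = a * (c + 1) by ring, show b * c + b = b * (c + 1) by ring] at this
end

section
/- Let v be a ℤⁿ-valued valuation on the rational function field ℂ(x₁,…,xₙ) with one-dimensional leaves whose value group is all of ℤⁿ, restricted to ℂ[x₁,…,xₙ]. Let I ⊆ ℂ[x₀,…,xₙ] be a nonzero homogeneous ideal generated by homogeneous polynomials of degree at most d, and let underlineΔ(I) ⊆ ℝⁿ × ℝ be constructed from I and v as described. Let q ∈ ℚ with q > d, and write q = b/a with a, b positive integers. Then the fiber underlineΔ_q := {α ∈ ℝⁿ : (α, q) ∈ underlineΔ(I)} satisfies underlineΔ_q = (1/a)·Δ( ((I^a)_b)|_{x₀=1} ), where Δ(L) denotes the Newton–Okounkov body of the subspace L with respect to v. -/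
open MvPolynomial Pointwise

set_option maxHeartbeats 4000000

/-- The lexicographic linear order on `ℤⁿ`. -/
noncomputable instance lexPiIntLinearOrder (n : ℕ) : LinearOrder (Lex (Fin n → ℤ)) :=
  @Pi.Lex.linearOrder (Fin n) (fun _ => ℤ) Fin.instLinearOrder
    (inferInstanceAs (WellFoundedLT (Fin n))) inferInstance

noncomputable instance lexPiIntMin (n : ℕ) : Min (Lex (Fin n → ℤ)) :=
  @LinearOrder.toMin _ (lexPiIntLinearOrder n)

/-- Setting `x₀ = 1`: the dehomogenization map `ℂ[x₀,…,xₙ] → ℂ[x₁,…,xₙ]`. -/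
noncomputable def dehom (n : ℕ) : MvPolynomial (Fin (n + 1)) ℂ →ₐ[ℂ] MvPolynomial (Fin n) ℂ :=
  aeval (Fin.cases 1 X)

/-- The smallest closed convex cone containing a subset `U` of a real vector space. -/
def closedConvexConeHull {E : Type*} [AddCommGroup E] [Module ℝ E] [TopologicalSpace E]
    (U : Set E) : Set E :=
  ⋂₀ {C : Set E | U ⊆ C ∧ IsClosed C ∧ Convex ℝ C ∧ ∀ c : ℝ, 0 ≤ c → ∀ x ∈ C, c • x ∈ C}

/-- The graded semigroup `U_I ⊆ ℝⁿ × ℝ²` of a homogeneous ideal `I ⊆ ℂ[x₀,…,xₙ]` with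
respect to a `ℤⁿ`-valued function `w` on `ℂ[x₁,…,xₙ]`. -/
def gradedSemigroup {n : ℕ} (w : MvPolynomial (Fin n) ℂ → (Fin n → ℤ))
    (I : Ideal (MvPolynomial (Fin (n + 1)) ℂ)) : Set ((Fin n → ℝ) × ℝ × ℝ) :=
  {p | ∃ s t : ℕ, ∃ α ∈ w ''
      ((⇑(dehom n) '' ((idealComponent (I ^ t) s : Set (MvPolynomial (Fin (n + 1)) ℂ)))) \ {0}),
    p = (fun i => (α i : ℝ), (s : ℝ), (t : ℝ))}

/-- `underlineΔ(I) = Σ(U_I) ∩ {t = 1} ⊆ ℝⁿ × ℝ`. -/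
def underlineDelta {n : ℕ} (w : MvPolynomial (Fin n) ℂ → (Fin n → ℤ))
    (I : Ideal (MvPolynomial (Fin (n + 1)) ℂ)) : Set ((Fin n → ℝ) × ℝ) :=
  {p | (p.1, p.2, (1 : ℝ)) ∈ closedConvexConeHull (gradedSemigroup w I)}

/-- The graded semigroup `U_L ⊆ ℝⁿ × ℝ` of a finite-dimensional subspace
`L ⊆ ℂ[x₁,…,xₙ]` with respect to a `ℤⁿ`-valued function `w`. -/
def subspaceSemigroup {n : ℕ} (w : MvPolynomial (Fin n) ℂ → (Fin n → ℤ))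
    (L : Submodule ℂ (MvPolynomial (Fin n) ℂ)) : Set ((Fin n → ℝ) × ℝ) :=
  {p | ∃ u : ℕ, ∃ α ∈ w ''
      (((L ^ u : Submodule ℂ (MvPolynomial (Fin n) ℂ)) : Set (MvPolynomial (Fin n) ℂ)) \ {0}),
    p = (fun i => (α i : ℝ), (u : ℝ))}

/-- The Newton–Okounkov body `Δ(L) = Σ(U_L) ∩ {u = 1} ⊆ ℝⁿ` of a subspace
`L ⊆ ℂ[x₁,…,xₙ]` with respect to a `ℤⁿ`-valued function `w`. -/
def NObodySubspace {n : ℕ} (w : MvPolynomial (Fin n) ℂ → (Fin n → ℤ))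
    (L : Submodule ℂ (MvPolynomial (Fin n) ℂ)) : Set (Fin n → ℝ) :=
  {α | (α, (1 : ℝ)) ∈ closedConvexConeHull (subspaceSemigroup w L)}

lemma support_degree {n e : ℕ} {f : MvPolynomial (Fin n) ℂ} (hf : f.IsHomogeneous e)
    {m : Fin n →₀ ℕ} (hm : m ∈ f.support) : m.degree = e := by
  by_contra h
  exact (mem_support_iff.mp hm) (hf.coeff_eq_zero h)

lemma dehom_monomial {n : ℕ} (m : Fin (n+1) →₀ ℕ) (c : ℂ) :
    dehom n (monomial m c) = monomial m.tail c := by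
  rw [dehom, aeval_monomial, monomial_eq]
  congr 1
  rw [Finsupp.prod_fintype _ _ (fun i => pow_zero _),
    Finsupp.prod_fintype _ _ (fun i => pow_zero _), Fin.prod_univ_succ]
  simp [Finsupp.tail_apply]

lemma dehom_X0 {n : ℕ} : dehom n (X 0) = 1 := by
  rw [dehom, aeval_X]; rfl

lemma dehom_injective_homogeneous {n e : ℕ} {f : MvPolynomial (Fin (n+1)) ℂ}
    (hf : f.IsHomogeneous e) (h : dehom n f = 0) : f = 0 := by
  rw [MvPolynomial.as_sum f] at h
  rw [map_sum] at h
  simp_rw [dehom_monomial] at h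
  ext m
  rw [coeff_zero]
  by_cases hm : m ∈ f.support
  · have h2 := congrArg (coeff m.tail) h
    rw [coeff_zero, coeff_sum] at h2
    rw [← h2]
    rw [Finset.sum_eq_single m]
    · simp [coeff_monomial]
    · intro m' hm' hne
      rw [coeff_monomial, if_neg]
      intro htail
      apply hne
      have hd : m' 0 = m 0 := by
        have d1 := support_degree hf hm
        have d2 := support_degree hf hm'
        have : m'.degree = m.degree := by rw [d1, d2]
        have hsum : ∀ (μ : Fin (n+1) →₀ ℕ), μ.degree = μ 0 + μ.tail.degree := by
          intro μ
          rw [Finsupp.degree_apply, Finsupp.degree_apply,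
            Finset.sum_subset (Finset.subset_univ μ.support)
              (by intro i _ hi; simpa using hi),
            Finset.sum_subset (Finset.subset_univ μ.tail.support)
              (by intro i _ hi; simpa using hi),
            Fin.sum_univ_succ]
          simp [Finsupp.tail_apply]
        have e1 := hsum m'
        have e2 := hsum m
        rw [htail] at e1
        omega
      ext i
      refine Fin.cases ?_ ?_ i
      · exact hd
      · intro j
        have := DFunLike.congr_fun htail j
        simpa [Finsupp.tail_apply] using this
    · intro h'; exact absurd hm h'
  · simpa using hm

lemma degree_univ {N : ℕ} (μ : Fin N →₀ ℕ) : μ.degree = ∑ i, μ i :=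
  Finset.sum_subset (Finset.subset_univ _) (by intro i _ hi; simpa using hi)

lemma degree_add' {N : ℕ} (μ ν : Fin N →₀ ℕ) : (μ + ν).degree = μ.degree + ν.degree := by
  simp [degree_univ, Finset.sum_add_distrib]

lemma degree_single' {N : ℕ} (i : Fin N) (c : ℕ) : (Finsupp.single i c).degree = c := by
  simp [degree_univ, Finsupp.single_apply]

/-- Splitting a finsupp of given degree. -/
lemma finsupp_split {N : ℕ} (c : ℕ) : ∀ (σ : Fin N →₀ ℕ), c ≤ σ.degree →
    ∃ σ₁ τ : Fin N →₀ ℕ, σ = σ₁ + τ ∧ σ₁.degree = c := by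
  induction c with
  | zero => intro σ _; exact ⟨0, σ, by simp, by simp⟩
  | succ c ih =>
    intro σ hc
    obtain ⟨σ₁, τ, h1, h2⟩ := ih σ (Nat.le_of_succ_le hc)
    have hτ : τ ≠ 0 := by
      rintro rfl
      rw [h1] at hc
      simp [degree_add', h2] at hc
    obtain ⟨i, hi⟩ := Finsupp.ne_iff.mp hτ
    simp only [Finsupp.coe_zero, Pi.zero_apply] at hi
    have hle : Finsupp.single i 1 ≤ τ := by
      rw [Finsupp.single_le_iff]
      omega
    refine ⟨σ₁ + Finsupp.single i 1, τ - Finsupp.single i 1, ?_, ?_⟩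
    · rw [h1, add_assoc, add_tsub_cancel_of_le hle]
    · rw [degree_add', h2, degree_single']

section SetPow
variable {n : ℕ} {S : Set (MvPolynomial (Fin (n + 1)) ℂ)} {d : ℕ}
  (hS : ∀ f ∈ S, ∃ e ≤ d, f.IsHomogeneous e)

include hS in
lemma setPow_homogeneous : ∀ (m : ℕ) (G : MvPolynomial (Fin (n + 1)) ℂ), G ∈ S ^ m →
    ∃ E ≤ d * m, G.IsHomogeneous E := by
  intro m
  induction m with
  | zero => intro G hG; rw [pow_zero, Set.mem_one] at hG; exact ⟨0, by simp, hG ▸ isHomogeneous_one _ _⟩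
  | succ m ih =>
    intro G hG
    rw [pow_succ, Set.mem_mul] at hG
    obtain ⟨G₁, hG₁, G₂, hG₂, rfl⟩ := hG
    obtain ⟨E₁, hE₁, h₁⟩ := ih G₁ hG₁
    obtain ⟨E₂, hE₂, h₂⟩ := hS G₂ hG₂
    exact ⟨E₁ + E₂, by nlinarith, h₁.mul h₂⟩

lemma setPow_mem_pow (m : ℕ) (G : MvPolynomial (Fin (n + 1)) ℂ) (hG : G ∈ S ^ m) :
    G ∈ Ideal.span S ^ m := by
  rw [Ideal.span, Submodule.span_pow]
  exact Submodule.subset_span hG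

include hS in
/-- Key splitting lemma: a monomial times a product of `k*a` generators, of total degree
`k*b`, lies in the `k`-th power of `(I^a)_b`. -/
lemma monomial_mul_setPow (a b : ℕ) (ha : 0 < a) (hab : d * a ≤ b) :
    ∀ (k : ℕ) (G : MvPolynomial (Fin (n + 1)) ℂ), G ∈ S ^ (k * a) →
    ∀ (m : Fin (n+1) →₀ ℕ) (c : ℂ), G.IsHomogeneous (k * b - m.degree) →
      m.degree ≤ k * b →
    monomial m c * G ∈ (idealComponent (Ideal.span S ^ a) b) ^ k := by
  intro k
  induction k with
  | zero =>
    intro G hG m c hhom hdeg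
    simp only [Nat.zero_mul, pow_zero, Set.mem_one] at hG
    subst hG
    simp only [Nat.zero_mul, Nat.le_zero] at hdeg
    have hm : m = 0 := by
      rw [← Finsupp.degree_eq_zero_iff]
      omega
    subst hm
    rw [pow_zero, mul_one]
    rw [Submodule.one_eq_span]
    have : (monomial (0 : Fin (n+1) →₀ ℕ) c) = c • (1 : MvPolynomial (Fin (n+1)) ℂ) := by
      rw [smul_eq_C_mul, mul_one, C_apply]
    rw [this]
    exact Submodule.smul_mem _ c (Submodule.subset_span rfl)
  | succ k ih =>
    intro G hG m c hhom hdeg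
    rw [Nat.succ_mul] at hhom hdeg
    rw [Nat.succ_mul, pow_add, Set.mem_mul] at hG
    obtain ⟨G₂, hG₂, G₁, hG₁, rfl⟩ := hG
    by_cases hzero : G₂ * G₁ = 0
    · rw [hzero, mul_zero]; exact zero_mem _
    have hG₂0 : G₂ ≠ 0 := fun h => hzero (by rw [h, zero_mul])
    have hG₁0 : G₁ ≠ 0 := fun h => hzero (by rw [h, mul_zero])
    obtain ⟨E₂, hE₂, hh₂⟩ := setPow_homogeneous hS _ _ hG₂
    obtain ⟨E₁, hE₁, hh₁⟩ := setPow_homogeneous hS _ _ hG₁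
    -- total degree bookkeeping
    have hdegG : (G₂ * G₁).IsHomogeneous (E₂ + E₁) := hh₂.mul hh₁
    have hEeq : E₂ + E₁ = k * b + b - m.degree := hdegG.inj_right hhom hzero
    have hE₂b : E₂ ≤ k * b := le_trans hE₂ (by nlinarith)
    have hE₁b : E₁ ≤ b := le_trans hE₁ hab
    have hsplit : b - E₁ ≤ m.degree := by omega
    obtain ⟨m₁, m₂, hm12, hm₁deg⟩ := finsupp_split (b - E₁) m hsplit
    have hmono : monomial (m₁ + m₂) c = monomial m₂ 1 * monomial m₁ c := by
      rw [monomial_mul, one_mul]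
      exact congrArg (fun σ : Fin (n+1) →₀ ℕ => monomial σ c) (add_comm m₁ m₂)
    have hkey : monomial m c * (G₂ * G₁) =
        (monomial m₂ 1 * G₂) * (monomial m₁ c * G₁) := by
      rw [hm12, hmono]; ring
    rw [hkey, pow_succ]
    refine Submodule.mul_mem_mul ?_ ?_
    · refine ih G₂ hG₂ m₂ 1 ?_ ?_
      · have hm₂deg : m₂.degree = k * b - E₂ := by
          have := degree_add' m₁ m₂
          rw [← hm12] at this
          omega
        rw [hm₂deg]
        have : k * b - m₂.degree = E₂ := by omega
        rw [hm₂deg] at this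
        rw [this]
        exact hh₂
      · have := degree_add' m₁ m₂
        rw [← hm12] at this
        omega
    · rw [mem_idealComponent]
      constructor
      · exact Ideal.mul_mem_left _ _ (setPow_mem_pow a G₁ hG₁)
      · have : b = (b - E₁) + E₁ := by omega
        rw [this]
        exact (isHomogeneous_monomial c hm₁deg).mul hh₁

end SetPow

section Comp
variable {n : ℕ}

lemma idealComponent_mul_le (I J : Ideal (MvPolynomial (Fin (n + 1)) ℂ)) (s t : ℕ) :
    idealComponent I s * idealComponent J t ≤ idealComponent (I * J) (s + t) := by
  rw [Submodule.mul_le]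
  intro f hf g hg
  rw [mem_idealComponent] at hf hg ⊢
  exact ⟨Ideal.mul_mem_mul hf.1 hg.1, hf.2.mul hg.2⟩

lemma one_le_idealComponent (I : Ideal (MvPolynomial (Fin (n + 1)) ℂ)) :
    (1 : Submodule ℂ (MvPolynomial (Fin (n + 1)) ℂ)) ≤ idealComponent (I ^ 0) 0 := by
  rw [Submodule.one_eq_span, Submodule.span_le, Set.singleton_subset_iff]
  rw [SetLike.mem_coe, mem_idealComponent]
  exact ⟨by rw [pow_zero, Ideal.one_eq_top]; trivial, isHomogeneous_one _ _⟩

lemma idealComponent_pow_le (I : Ideal (MvPolynomial (Fin (n + 1)) ℂ)) (a b : ℕ) :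
    ∀ u : ℕ, (idealComponent (I ^ a) b) ^ u ≤ idealComponent (I ^ (u * a)) (u * b) := by
  intro u
  induction u with
  | zero => simpa using one_le_idealComponent I
  | succ u ih =>
    rw [pow_succ]
    calc idealComponent (I ^ a) b ^ u * idealComponent (I ^ a) b
        ≤ idealComponent (I ^ (u * a)) (u * b) * idealComponent (I ^ a) b :=
          mul_le_mul' ih le_rfl
      _ ≤ idealComponent (I ^ (u * a) * I ^ a) (u * b + b) := idealComponent_mul_le _ _ _ _
      _ = idealComponent (I ^ ((u + 1) * a)) ((u + 1) * b) := by
          rw [← pow_add, Nat.succ_mul, Nat.succ_mul]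

variable {S : Set (MvPolynomial (Fin (n + 1)) ℂ)} {d : ℕ}
  (hS : ∀ f ∈ S, ∃ e ≤ d, f.IsHomogeneous e)

include hS in
lemma homog_mul_setPow {a b k : ℕ} (ha : 0 < a) (hab : d * a ≤ b)
    {h G : MvPolynomial (Fin (n + 1)) ℂ} {i E : ℕ} (hh : h.IsHomogeneous i)
    (hG : G ∈ S ^ (k * a)) (hGE : G.IsHomogeneous E) (hiE : i + E = k * b) :
    h * G ∈ (idealComponent (Ideal.span S ^ a) b) ^ k := by
  nth_rw 1 [MvPolynomial.as_sum h]
  rw [Finset.sum_mul]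
  refine Submodule.sum_mem _ (fun m hm => ?_)
  by_cases hG0 : G = 0
  · rw [hG0, mul_zero]; exact zero_mem _
  have hmdeg : m.degree = i := support_degree hh hm
  have hEeq : E = k * b - m.degree := by omega
  refine monomial_mul_setPow hS a b ha hab k G hG m _ (hEeq ▸ hGE) (by omega)

include hS in
lemma idealComponent_le_pow {a b k : ℕ} (ha : 0 < a) (hab : d * a ≤ b) :
    idealComponent ((Ideal.span S) ^ (k * a)) (k * b) ≤
      (idealComponent (Ideal.span S ^ a) b) ^ k := by
  intro f hf
  rw [mem_idealComponent] at hf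
  obtain ⟨hfI, hfh⟩ := hf
  have key : ∀ g ∈ Submodule.span (MvPolynomial (Fin (n + 1)) ℂ) (S ^ (k * a)),
      ∀ r : MvPolynomial (Fin (n + 1)) ℂ,
      homogeneousComponent (k * b) (r * g) ∈ (idealComponent (Ideal.span S ^ a) b) ^ k := by
    intro g hg
    refine Submodule.span_induction ?_ ?_ ?_ ?_ hg
    · -- generators
      intro G hG r
      obtain ⟨E, hEd, hGE⟩ := setPow_homogeneous hS _ _ hG
      -- expand r into homogeneous components
      rw [← sum_homogeneousComponent r, Finset.sum_mul, map_sum]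
      refine Submodule.sum_mem _ (fun i _ => ?_)
      have hhom : (homogeneousComponent i r * G).IsHomogeneous (i + E) :=
        (homogeneousComponent_isHomogeneous i r).mul hGE
      rw [homogeneousComponent_of_mem ((mem_homogeneousSubmodule _ _).mpr hhom)]
      split_ifs with hcase
      · exact homog_mul_setPow hS ha hab (homogeneousComponent_isHomogeneous i r) hG hGE
          hcase.symm
      · exact zero_mem _
    · intro r; rw [mul_zero, map_zero]; exact zero_mem _
    · intro x y _ _ hx hy r
      rw [mul_add, map_add]
      exact add_mem (hx r) (hy r)
    · intro c x _ hx r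
      rw [smul_eq_mul, ← mul_assoc]
      exact hx (r * c)
  have hfI' : f ∈ Submodule.span (MvPolynomial (Fin (n + 1)) ℂ) (S ^ (k * a)) := by
    rw [← Submodule.span_pow, ← Ideal.span]
    exact hfI
  have := key f hfI' 1
  rw [one_mul, homogeneousComponent_of_mem
    ((mem_homogeneousSubmodule _ _).mpr hfh), if_pos rfl] at this
  exact this

end Comp

section Cone
variable {E : Type*} [AddCommGroup E] [Module ℝ E] [TopologicalSpace E]

lemma subset_cch (U : Set E) : U ⊆ closedConvexConeHull U :=
  fun _ hx => Set.mem_sInter.mpr fun _ hC => hC.1 hx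

lemma cch_closed (U : Set E) : IsClosed (closedConvexConeHull U) :=
  isClosed_sInter fun _ hC => hC.2.1

lemma cch_smul (U : Set E) {c : ℝ} (hc : 0 ≤ c) {x : E} (hx : x ∈ closedConvexConeHull U) :
    c • x ∈ closedConvexConeHull U :=
  Set.mem_sInter.mpr fun C hC => hC.2.2.2 c hc x (Set.mem_sInter.mp hx C hC)

lemma cch_convex (U : Set E) : Convex ℝ (closedConvexConeHull U) :=
  fun _ hx _ hy s t hs ht hst => Set.mem_sInter.mpr fun C hC =>
    hC.2.2.1 (Set.mem_sInter.mp hx C hC) (Set.mem_sInter.mp hy C hC) hs ht hst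

lemma cch_mono {U V : Set E} (h : U ⊆ closedConvexConeHull V) :
    closedConvexConeHull U ⊆ closedConvexConeHull V :=
  fun _ hx => Set.mem_sInter.mp hx _ ⟨h, cch_closed V, fun x hx y hy s t hs ht hst =>
    Set.mem_sInter.mp ((by exact Set.mem_sInter.mpr fun C hC => hC.2.2.1 (Set.mem_sInter.mp hx C hC) (Set.mem_sInter.mp hy C hC) hs ht hst : (s • x + t • y) ∈ closedConvexConeHull V)) ,
    fun c hc x hx => cch_smul V hc hx⟩

/-- The set of nonnegative multiples of elements of `U`. -/
def nnSMulSet (U : Set E) : Set E := {x | ∃ c : ℝ, 0 ≤ c ∧ ∃ u ∈ U, x = c • u}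

lemma nnSMul_closure_smul (U : Set E) {c : ℝ} (hc : 0 ≤ c) {x : E}
    (hx : x ∈ AddSubmonoid.closure (nnSMulSet U)) :
    c • x ∈ AddSubmonoid.closure (nnSMulSet U) := by
  induction hx using AddSubmonoid.closure_induction with
  | mem y hy =>
    obtain ⟨c', hc', u, hu, rfl⟩ := hy
    exact AddSubmonoid.subset_closure ⟨c * c', mul_nonneg hc hc', u, hu, smul_smul c c' u⟩
  | zero => rw [smul_zero]; exact zero_mem _
  | add x y _ _ hx hy => rw [smul_add]; exact add_mem hx hy

lemma nnSMul_closure_convex (U : Set E) :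
    Convex ℝ ((AddSubmonoid.closure (nnSMulSet U) : Set E)) := by
  intro x hx y hy s t hs ht _
  exact add_mem (nnSMul_closure_smul U hs hx) (nnSMul_closure_smul U ht hy)

variable [IsTopologicalAddGroup E] [ContinuousSMul ℝ E]

lemma cch_subset_closure (U : Set E) :
    closedConvexConeHull U ⊆ closure (AddSubmonoid.closure (nnSMulSet U) : Set E) := by
  refine Set.sInter_subset_of_mem ?_
  refine ⟨?_, isClosed_closure, (nnSMul_closure_convex U).closure, ?_⟩
  · intro u hu
    exact subset_closure (AddSubmonoid.subset_closure ⟨1, zero_le_one, u, hu, (one_smul ℝ u).symm⟩)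
  · intro c hc x hx
    have : c • x ∈ closure ((fun y => c • y) '' (AddSubmonoid.closure (nnSMulSet U) : Set E)) :=
      (image_closure_subset_closure_image (continuous_const_smul c)) ⟨x, hx, rfl⟩
    refine closure_mono ?_ this
    rintro _ ⟨y, hy, rfl⟩
    exact nnSMul_closure_smul U hc hy

end Cone



section Valuation
variable {n : ℕ} {w : MvPolynomial (Fin n) ℂ → (Fin n → ℤ)}
  (hw_mul : ∀ p r : MvPolynomial (Fin n) ℂ, p ≠ 0 → r ≠ 0 → w (p * r) = w p + w r)

include hw_mul

lemma w_one : w 1 = 0 := by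
  have := hw_mul 1 1 one_ne_zero one_ne_zero
  rw [one_mul] at this
  exact (left_eq_add.mp this)

lemma w_pow {p : MvPolynomial (Fin n) ℂ} (hp : p ≠ 0) (m : ℕ) : w (p ^ m) = m • w p := by
  induction m with
  | zero => rw [pow_zero, zero_smul]; exact w_one hw_mul
  | succ m ih =>
    rw [pow_succ, hw_mul _ _ (pow_ne_zero m hp) hp, ih, succ_nsmul]

end Valuation

section CompMul
variable {n : ℕ}

lemma comp_mul {I : Ideal (MvPolynomial (Fin (n + 1)) ℂ)} {s t s' t' : ℕ}
    {F G : MvPolynomial (Fin (n + 1)) ℂ}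
    (hF : F ∈ idealComponent (I ^ t) s) (hG : G ∈ idealComponent (I ^ t') s') :
    F * G ∈ idealComponent (I ^ (t + t')) (s + s') := by
  rw [mem_idealComponent] at hF hG ⊢
  exact ⟨pow_add I t t' ▸ Ideal.mul_mem_mul hF.1 hG.1, hF.2.mul hG.2⟩

lemma comp_pow {I : Ideal (MvPolynomial (Fin (n + 1)) ℂ)} {s t : ℕ}
    {F : MvPolynomial (Fin (n + 1)) ℂ} (hF : F ∈ idealComponent (I ^ t) s) (m : ℕ) :
    F ^ m ∈ idealComponent (I ^ (m * t)) (m * s) := by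
  rw [mem_idealComponent] at hF ⊢
  constructor
  · rw [mul_comm, pow_mul]
    exact Ideal.pow_mem_pow hF.1 m
  · rw [mul_comm]
    exact hF.2.pow m

lemma one_mem_comp (I : Ideal (MvPolynomial (Fin (n + 1)) ℂ)) :
    (1 : MvPolynomial (Fin (n + 1)) ℂ) ∈ idealComponent (I ^ 0) 0 := by
  rw [mem_idealComponent, pow_zero, Ideal.one_eq_top]
  exact ⟨trivial, isHomogeneous_one _ _⟩

end CompMul

section Approx

variable {n : ℕ} {w : MvPolynomial (Fin n) ℂ → (Fin n → ℤ)}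
  (hw_mul : ∀ p r : MvPolynomial (Fin n) ℂ, p ≠ 0 → r ≠ 0 → w (p * r) = w p + w r)
  {I : Ideal (MvPolynomial (Fin (n + 1)) ℂ)}

/-- cast of an integer vector to a real vector -/
def castW {n : ℕ} (W : Fin n → ℤ) : Fin n → ℝ := fun i => (W i : ℝ)

lemma castW_add {n : ℕ} (A B : Fin n → ℤ) : castW (A + B) = castW A + castW B := by
  funext i; simp [castW]

lemma castW_nsmul {n : ℕ} (m : ℕ) (A : Fin n → ℤ) : castW (m • A) = (m : ℝ) • castW A := by
  funext i; simp [castW]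

include hw_mul in
/-- Every finite nonnegative combination of points of `U_I` is approximated, after scaling
by a positive integer, by an actual point of the graded semigroup. -/
lemma approx_combo :
    ∀ (l : List ((Fin n → ℝ) × ℝ × ℝ)), (∀ z ∈ l, z ∈ nnSMulSet (gradedSemigroup w I)) →
    ∀ η : ℝ, 0 < η →
    ∃ (M S T : ℕ) (F : MvPolynomial (Fin (n+1)) ℂ), 0 < M ∧
      F ∈ idealComponent (I ^ T) S ∧ dehom n F ≠ 0 ∧
      ‖((castW (w (dehom n F)), (S : ℝ), (T : ℝ)) - (M : ℝ) • l.sum :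
        (Fin n → ℝ) × ℝ × ℝ)‖ ≤ M * η := by
  intro l
  induction l with
  | nil =>
    intro _ η hη
    refine ⟨1, 0, 0, 1, one_pos, one_mem_comp I, by simp, ?_⟩
    have hw1 : w (dehom n 1) = 0 := by rw [map_one]; exact w_one hw_mul
    have hc0 : castW (w (dehom n 1)) = 0 := by rw [hw1]; funext i; simp [castW]
    rw [hc0, List.sum_nil, smul_zero, sub_zero]
    simp only [Nat.cast_zero, Nat.cast_one, one_mul]
    have h0 : ‖((0 : Fin n → ℝ), (0:ℝ), (0:ℝ))‖ = 0 := by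
      simp [Prod.norm_def]
    rw [h0]
    linarith
  | cons z l ih =>
    intro hmem η hη
    obtain ⟨c, hc, u, hu, rfl⟩ := hmem z List.mem_cons_self
    obtain ⟨M₁, S₁, T₁, F₁, hM₁, hF₁, hdF₁, hbound₁⟩ :=
      ih (fun z' hz' => hmem z' (List.mem_cons_of_mem _ hz')) (η/2) (by linarith)
    obtain ⟨s₀, t₀, α₀, hα₀, hueq⟩ := hu
    obtain ⟨f₀', hf₀', hwf₀⟩ := hα₀
    obtain ⟨⟨F₀, hF₀, hdF₀⟩, hf₀ne⟩ := hf₀'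
    -- rational approximation of c
    obtain ⟨ρ, hρ1, hρ2⟩ := exists_rat_btwn (show c < c + η / (2 * (1 + ‖u‖)) by
      have : (0:ℝ) < 1 + ‖u‖ := by positivity
      have : (0:ℝ) < η / (2 * (1 + ‖u‖)) := by positivity
      linarith)
    have hρ0 : 0 ≤ ρ := by
      have : (0:ℝ) ≤ (ρ:ℝ) := le_of_lt (lt_of_le_of_lt hc hρ1)
      exact_mod_cast this
    set n₂ : ℕ := ρ.num.toNat with hn₂
    set M₂ : ℕ := ρ.den with hM₂
    have hM₂pos : 0 < M₂ := ρ.pos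
    have hnum : ((n₂ : ℤ)) = ρ.num := Int.toNat_of_nonneg (Rat.num_nonneg.mpr hρ0)
    have hρcast : (ρ:ℝ) = (n₂ : ℝ) / (M₂ : ℝ) := by
      rw [Rat.cast_def, hM₂]
      congr 1
      exact_mod_cast (congrArg (fun z : ℤ => (z:ℝ)) hnum).symm
    refine ⟨M₂ * M₁, M₂ * S₁ + (n₂ * M₁) * s₀, M₂ * T₁ + (n₂ * M₁) * t₀,
      F₁ ^ M₂ * F₀ ^ (n₂ * M₁), Nat.mul_pos hM₂pos hM₁, ?_, ?_, ?_⟩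
    · exact comp_mul (comp_pow hF₁ M₂) (comp_pow hF₀ (n₂ * M₁))
    · rw [map_mul, map_pow, map_pow]
      exact mul_ne_zero (pow_ne_zero _ hdF₁) (pow_ne_zero _ (fun h => hf₀ne (hdF₀ ▸ h ▸ rfl)))
    · -- the norm bound
      have hf₀ne' : f₀' ≠ 0 := fun h => hf₀ne (by simp [h])
      have hwF : w (dehom n (F₁ ^ M₂ * F₀ ^ (n₂ * M₁)))
          = M₂ • w (dehom n F₁) + (n₂ * M₁) • α₀ := by
        rw [map_mul, map_pow, map_pow, hdF₀,
          hw_mul _ _ (pow_ne_zero _ hdF₁) (pow_ne_zero _ hf₀ne'),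
          w_pow hw_mul hdF₁, w_pow hw_mul hf₀ne', hwf₀]
      have hX : ((castW (w (dehom n (F₁ ^ M₂ * F₀ ^ (n₂ * M₁)))),
            ((M₂ * S₁ + n₂ * M₁ * s₀ : ℕ) : ℝ), ((M₂ * T₁ + n₂ * M₁ * t₀ : ℕ) : ℝ)) :
            (Fin n → ℝ) × ℝ × ℝ)
          = (M₂ : ℝ) • ((castW (w (dehom n F₁)), ((S₁:ℕ):ℝ), ((T₁:ℕ):ℝ)) :
              (Fin n → ℝ) × ℝ × ℝ)
            + ((n₂ * M₁ : ℕ) : ℝ) • u := by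
        rw [hueq, hwF, castW_add, castW_nsmul, castW_nsmul]
        have hα : (fun i => ((α₀ i : ℤ) : ℝ)) = castW α₀ := rfl
        rw [hα]
        refine Prod.ext rfl (Prod.ext ?_ ?_)
        · show ((M₂ * S₁ + n₂ * M₁ * s₀ : ℕ) : ℝ)
            = (M₂:ℝ) * (S₁:ℝ) + ((n₂ * M₁ : ℕ):ℝ) * (s₀:ℝ)
          push_cast; ring
        · show ((M₂ * T₁ + n₂ * M₁ * t₀ : ℕ) : ℝ)
            = (M₂:ℝ) * (T₁:ℝ) + ((n₂ * M₁ : ℕ):ℝ) * (t₀:ℝ)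
          push_cast; ring
      rw [List.sum_cons, hX]
      have hn₂val : (n₂:ℝ) = (ρ:ℝ) * (M₂:ℝ) := by
        rw [hρcast]
        field_simp
      have hsplit : (M₂ : ℝ) • ((castW (w (dehom n F₁)), ((S₁:ℕ):ℝ), ((T₁:ℕ):ℝ)) :
              (Fin n → ℝ) × ℝ × ℝ)
            + ((n₂ * M₁ : ℕ) : ℝ) • u - ((M₂ * M₁ : ℕ) : ℝ) • (c • u + l.sum)
          = (M₂:ℝ) • (((castW (w (dehom n F₁)), ((S₁:ℕ):ℝ), ((T₁:ℕ):ℝ)) :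
              (Fin n → ℝ) × ℝ × ℝ) - (M₁:ℝ) • l.sum)
            + (((n₂ * M₁:ℕ):ℝ) - ((M₂ * M₁:ℕ):ℝ) * c) • u := by
        push_cast
        module
      rw [hsplit]
      have h1 : ‖(M₂:ℝ) • (((castW (w (dehom n F₁)), ((S₁:ℕ):ℝ), ((T₁:ℕ):ℝ)) :
              (Fin n → ℝ) × ℝ × ℝ) - (M₁:ℝ) • l.sum)‖ ≤ (M₂:ℝ) * ((M₁:ℝ) * (η/2)) := by
        rw [norm_smul, Real.norm_eq_abs, abs_of_nonneg (by positivity)]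
        exact mul_le_mul_of_nonneg_left hbound₁ (by positivity)
      have hcoef : (((n₂ * M₁:ℕ):ℝ) - ((M₂ * M₁:ℕ):ℝ) * c) = (M₁:ℝ) * (M₂:ℝ) * ((ρ:ℝ) - c) := by
        push_cast
        rw [hn₂val]
        ring
      have h2 : ‖(((n₂ * M₁:ℕ):ℝ) - ((M₂ * M₁:ℕ):ℝ) * c) • u‖
          ≤ (M₁:ℝ) * (M₂:ℝ) * (η / (2 * (1 + ‖u‖))) * ‖u‖ := by
        rw [norm_smul, Real.norm_eq_abs, hcoef]
        have hd : |(M₁:ℝ) * (M₂:ℝ) * ((ρ:ℝ) - c)| = (M₁:ℝ) * (M₂:ℝ) * ((ρ:ℝ) - c) := by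
          apply abs_of_nonneg
          have : (0:ℝ) ≤ (ρ:ℝ) - c := by linarith
          positivity
        rw [hd]
        have hρc : (ρ:ℝ) - c ≤ η / (2 * (1 + ‖u‖)) := by linarith
        have := mul_le_mul_of_nonneg_right (mul_le_mul_of_nonneg_left hρc
          (show (0:ℝ) ≤ (M₁:ℝ) * (M₂:ℝ) by positivity)) (norm_nonneg u)
        calc (M₁:ℝ) * (M₂:ℝ) * ((ρ:ℝ) - c) * ‖u‖
            ≤ (M₁:ℝ) * (M₂:ℝ) * (η / (2 * (1 + ‖u‖))) * ‖u‖ := this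
          _ ≤ (M₁:ℝ) * (M₂:ℝ) * (η / (2 * (1 + ‖u‖))) * ‖u‖ := le_refl _
      calc ‖(M₂:ℝ) • (((castW (w (dehom n F₁)), ((S₁:ℕ):ℝ), ((T₁:ℕ):ℝ)) :
              (Fin n → ℝ) × ℝ × ℝ) - (M₁:ℝ) • l.sum)
            + (((n₂ * M₁:ℕ):ℝ) - ((M₂ * M₁:ℕ):ℝ) * c) • u‖
          ≤ (M₂:ℝ) * ((M₁:ℝ) * (η/2)) + (M₁:ℝ) * (M₂:ℝ) * (η / (2 * (1 + ‖u‖))) * ‖u‖ :=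
            le_trans (norm_add_le _ _) (add_le_add h1 h2)
        _ ≤ ((M₂ * M₁ : ℕ):ℝ) * η := by
            push_cast
            have hu0 : (0:ℝ) ≤ ‖u‖ := norm_nonneg u
            have hM₁' : (1:ℝ) ≤ (M₁:ℝ) := by exact_mod_cast hM₁
            have hM₂' : (1:ℝ) ≤ (M₂:ℝ) := by exact_mod_cast hM₂pos
            have hfrac : η / (2 * (1 + ‖u‖)) * ‖u‖ ≤ η / 2 := by
              rw [div_mul_eq_mul_div, div_le_div_iff₀ (by positivity) (by positivity)]
              nlinarith
            nlinarith [mul_le_mul_of_nonneg_left hfrac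
              (show (0:ℝ) ≤ (M₁:ℝ) * (M₂:ℝ) by positivity)]

end Approx

/-- Let `v` be a `ℤⁿ`-valued valuation with one-dimensional leaves on
`ℂ(x₁,…,xₙ)` whose value group is all of `ℤⁿ`, restricted to `ℂ[x₁,…,xₙ]`. Let
`I ⊆ ℂ[x₀,…,xₙ]` be a nonzero homogeneous ideal generated in degrees `≤ d`, and let
`q = b/a ∈ ℚ` with `q > d` and `a, b > 0`. Then the fiber of `underlineΔ(I)` over `q`
equals `(1/a)·Δ(((I^a)_b)|_{x₀=1})`. -/
theorem underlineDelta_fiber (n d : ℕ)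
    (v : FractionRing (MvPolynomial (Fin n) ℂ) → Lex (Fin n → ℤ))
    (hv_mul : ∀ f g : FractionRing (MvPolynomial (Fin n) ℂ), f ≠ 0 → g ≠ 0 →
      v (f * g) = v f + v g)
    (hv_add : ∀ f g : FractionRing (MvPolynomial (Fin n) ℂ), f ≠ 0 → g ≠ 0 → f + g ≠ 0 →
      min (v f) (v g) ≤ v (f + g))
    (hv_const : ∀ c : ℂ, c ≠ 0 →
      v (algebraMap (MvPolynomial (Fin n) ℂ) (FractionRing (MvPolynomial (Fin n) ℂ)) (C c)) = 0)
    (hv_leaves : ∀ f g : FractionRing (MvPolynomial (Fin n) ℂ), f ≠ 0 → g ≠ 0 → v f = v g →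
      ∃ c : ℂ, c ≠ 0 ∧
        (f = algebraMap (MvPolynomial (Fin n) ℂ) (FractionRing (MvPolynomial (Fin n) ℂ)) (C c) * g ∨
          (f - algebraMap (MvPolynomial (Fin n) ℂ) (FractionRing (MvPolynomial (Fin n) ℂ)) (C c) * g ≠ 0 ∧
            v f < v (f - algebraMap (MvPolynomial (Fin n) ℂ)
              (FractionRing (MvPolynomial (Fin n) ℂ)) (C c) * g))))
    (hv_surj : ∀ γ : Lex (Fin n → ℤ), ∃ f : FractionRing (MvPolynomial (Fin n) ℂ),
      f ≠ 0 ∧ v f = γ)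
    (I : Ideal (MvPolynomial (Fin (n + 1)) ℂ)) (hI0 : I ≠ ⊥)
    (hI : ∃ S : Set (MvPolynomial (Fin (n + 1)) ℂ),
      (∀ f ∈ S, ∃ e ≤ d, f.IsHomogeneous e) ∧ I = Ideal.span S)
    (q : ℚ) (hqd : (d : ℚ) < q) (a b : ℕ) (ha : 0 < a) (hb : 0 < b)
    (hq : q = (b : ℚ) / (a : ℚ)) :
    {α : Fin n → ℝ |
        (α, (q : ℝ)) ∈
          underlineDelta
            (fun p => ofLex (v (algebraMap (MvPolynomial (Fin n) ℂ)
              (FractionRing (MvPolynomial (Fin n) ℂ)) p))) I} =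
      ((a : ℝ))⁻¹ •
        NObodySubspace
          (fun p => ofLex (v (algebraMap (MvPolynomial (Fin n) ℂ)
            (FractionRing (MvPolynomial (Fin n) ℂ)) p)))
          (Submodule.map (dehom n).toLinearMap (idealComponent (I ^ a) b)) := by
  set w : MvPolynomial (Fin n) ℂ → (Fin n → ℤ) :=
    fun p => ofLex (v (algebraMap (MvPolynomial (Fin n) ℂ)
      (FractionRing (MvPolynomial (Fin n) ℂ)) p)) with hw
  have hinj : Function.Injective (algebraMap (MvPolynomial (Fin n) ℂ)
      (FractionRing (MvPolynomial (Fin n) ℂ))) := IsFractionRing.injective _ _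
  have hmapne : ∀ p : MvPolynomial (Fin n) ℂ, p ≠ 0 →
      algebraMap (MvPolynomial (Fin n) ℂ) (FractionRing (MvPolynomial (Fin n) ℂ)) p ≠ 0 := by
    intro p hp h
    exact hp (hinj (by rw [h, map_zero]))
  have hw_mul : ∀ p r : MvPolynomial (Fin n) ℂ, p ≠ 0 → r ≠ 0 → w (p * r) = w p + w r := by
    intro p r hp hr
    show ofLex (v (algebraMap _ _ (p * r))) = _
    rw [map_mul, hv_mul _ _ (hmapne p hp) (hmapne r hr)]
    rfl
  have ha' : (0:ℝ) < (a:ℝ) := by exact_mod_cast ha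
  have hq' : ((q:ℝ)) = (b:ℝ) / (a:ℝ) := by
    rw [hq]; push_cast; ring
  set L : Submodule ℂ (MvPolynomial (Fin n) ℂ) :=
    Submodule.map (dehom n).toLinearMap (idealComponent (I ^ a) b) with hL
  ext α
  simp only [Set.mem_setOf_eq]
  constructor
  · -- hard direction
    intro hα
    have hx : ((α, (q:ℝ), 1) : (Fin n → ℝ) × ℝ × ℝ) ∈
        closedConvexConeHull (gradedSemigroup w I) := hα
    refine Set.mem_smul_set.mpr ⟨(a:ℝ) • α, ?_, by
      rw [smul_smul, inv_mul_cancel₀ (ne_of_gt ha'), one_smul]⟩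
    show (((a:ℝ) • α, 1) : (Fin n → ℝ) × ℝ) ∈ closedConvexConeHull (subspaceSemigroup w L)
    -- constants
    obtain ⟨Sg, hSg, hIspan⟩ := hI
    have hf0ex : ∃ f₀ ∈ Sg, f₀ ≠ 0 := by
      by_contra hcon
      push_neg at hcon
      exact hI0 (by rw [hIspan, Ideal.span_eq_bot]; exact hcon)
    obtain ⟨f₀, hf₀S, hf₀0⟩ := hf0ex
    obtain ⟨e, hed, hf₀hom⟩ := hSg f₀ hf₀S
    have hdab : d * a < b := by
      have h1 : (d:ℚ) * a < b := by
        rw [hq, lt_div_iff₀ (by exact_mod_cast ha : (0:ℚ) < (a:ℚ))] at hqd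
        linarith
      exact_mod_cast h1
    have hab : d * a ≤ b := le_of_lt hdab
    set g : MvPolynomial (Fin n) ℂ := dehom n f₀ with hgdef
    have hg0 : g ≠ 0 := fun h => hf₀0 (dehom_injective_homogeneous hf₀hom h)
    set w₀ : Fin n → ℤ := w g with hw₀
    set W₀ : ℝ := ‖castW w₀‖ with hW₀
    set A : ℝ := ‖α‖ with hA
    have hW₀0 : 0 ≤ W₀ := norm_nonneg _
    have hA0 : 0 ≤ A := norm_nonneg _
    have heq' : (e:ℝ) < (q:ℝ) := by
      have h1 : (d:ℝ) < (q:ℝ) := by exact_mod_cast hqd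
      have h2 : (e:ℝ) ≤ (d:ℝ) := by exact_mod_cast hed
      linarith
    set C : ℝ := 2 + 2 * (1 + (e:ℝ)) / ((q:ℝ) - e) with hC
    have hC2 : 2 ≤ C := by
      have : 0 ≤ 2 * (1 + (e:ℝ)) / ((q:ℝ) - e) := by
        apply div_nonneg (by positivity)
        linarith
      rw [hC]
      linarith
    set D : ℝ := (a:ℝ) * (2 + (C+1)*A + (C+3)*W₀) with hD
    have hD0 : 0 ≤ D := by
      apply mul_nonneg (le_of_lt ha')
      nlinarith
    -- closure argument
    refine (cch_closed _).closure_subset ?_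
    rw [Metric.mem_closure_iff]
    intro ε hε
    set η : ℝ := ε / (2 * (D + 1)) with hηdef
    have hη : 0 < η := by positivity
    have hx' := cch_subset_closure _ hx
    obtain ⟨y, hyM, hdisty⟩ := Metric.mem_closure_iff.mp hx' η hη
    obtain ⟨l, hl, hlsum⟩ := AddSubmonoid.exists_list_of_mem_closure hyM
    obtain ⟨M₀, S₀, T₀, F', hM₀, hF'mem, hdF', hb₀⟩ := approx_combo hw_mul l hl η hη
    rw [hlsum] at hb₀
    -- scale up the denominator
    set P₀ : ℕ := max 1 ⌈(a:ℝ)/η⌉₊ with hP₀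
    have hP₀pos : 0 < P₀ := lt_of_lt_of_le one_pos (le_max_left _ _)
    set M : ℕ := P₀ * M₀ with hM
    set S : ℕ := P₀ * S₀ with hSdef
    set T : ℕ := P₀ * T₀ with hTdef
    set F : MvPolynomial (Fin (n+1)) ℂ := F' ^ P₀ with hFdef
    have hMpos : 0 < M := Nat.mul_pos hP₀pos hM₀
    have hM1 : (1:ℝ) ≤ (M:ℝ) := by exact_mod_cast hMpos
    have hFmem : F ∈ idealComponent (I ^ T) S := comp_pow hF'mem P₀
    have hdF : dehom n F ≠ 0 := by
      rw [hFdef, map_pow]; exact pow_ne_zero _ hdF'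
    have hwFc : castW (w (dehom n F)) = (P₀:ℝ) • castW (w (dehom n F')) := by
      rw [hFdef, map_pow, w_pow hw_mul hdF', castW_nsmul]
    have hbM : ‖((castW (w (dehom n F)), (S:ℝ), (T:ℝ)) - (M:ℝ) • y :
        (Fin n → ℝ) × ℝ × ℝ)‖ ≤ (M:ℝ) * η := by
      have hvec : ((castW (w (dehom n F)), (S:ℝ), (T:ℝ)) - (M:ℝ) • y :
          (Fin n → ℝ) × ℝ × ℝ)
          = (P₀:ℝ) • (((castW (w (dehom n F')), (S₀:ℝ), (T₀:ℝ)) - (M₀:ℝ) • y :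
            (Fin n → ℝ) × ℝ × ℝ)) := by
        rw [hwFc, smul_sub, smul_smul]
        congr 1
        · refine Prod.ext rfl (Prod.ext ?_ ?_)
          · show ((S:ℕ):ℝ) = (P₀:ℝ) * (S₀:ℝ)
            rw [hSdef]; push_cast; ring
          · show ((T:ℕ):ℝ) = (P₀:ℝ) * (T₀:ℝ)
            rw [hTdef]; push_cast; ring
        · congr 1
          rw [hM]; push_cast; ring
      rw [hvec, norm_smul, Real.norm_eq_abs, abs_of_nonneg (by positivity)]
      calc (P₀:ℝ) * ‖((castW (w (dehom n F')), (S₀:ℝ), (T₀:ℝ)) - (M₀:ℝ) • y :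
            (Fin n → ℝ) × ℝ × ℝ)‖ ≤ (P₀:ℝ) * ((M₀:ℝ) * η) :=
          mul_le_mul_of_nonneg_left hb₀ (by positivity)
        _ = (M:ℝ) * η := by rw [hM]; push_cast; ring
    have hMa : (a:ℝ) ≤ (M:ℝ) * η := by
      have h1 : (a:ℝ)/η ≤ (⌈(a:ℝ)/η⌉₊ : ℝ) := Nat.le_ceil _
      have h2 : (⌈(a:ℝ)/η⌉₊ : ℝ) ≤ (P₀:ℝ) := by exact_mod_cast le_max_right _ _
      have h3 : (P₀:ℝ) ≤ (M:ℝ) := by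
        rw [hM]; push_cast
        nlinarith [show (1:ℝ) ≤ (M₀:ℝ) by exact_mod_cast hM₀, show (0:ℝ) ≤ (P₀:ℝ) by positivity]
      have h4 : (a:ℝ)/η ≤ (M:ℝ) := by linarith
      rw [div_le_iff₀ hη] at h4
      linarith [h4]
    -- total bound vs the target point
    set xstar : (Fin n → ℝ) × ℝ × ℝ := (α, (q:ℝ), 1) with hxstar
    have htot : ‖((castW (w (dehom n F)), (S:ℝ), (T:ℝ)) - (M:ℝ) • xstar :
        (Fin n → ℝ) × ℝ × ℝ)‖ ≤ 2 * ((M:ℝ) * η) := by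
      have hsplit : ((castW (w (dehom n F)), (S:ℝ), (T:ℝ)) - (M:ℝ) • xstar :
          (Fin n → ℝ) × ℝ × ℝ)
          = (((castW (w (dehom n F)), (S:ℝ), (T:ℝ)) - (M:ℝ) • y) + ((M:ℝ) • y - (M:ℝ) • xstar) :
            (Fin n → ℝ) × ℝ × ℝ) := by
        abel
      rw [hsplit]
      refine le_trans (norm_add_le _ _) ?_
      have h5 : ‖((M:ℝ) • y - (M:ℝ) • xstar : (Fin n → ℝ) × ℝ × ℝ)‖ ≤ (M:ℝ) * η := by
        rw [← smul_sub, norm_smul, Real.norm_eq_abs, abs_of_nonneg (by positivity)]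
        have : ‖(y - xstar : (Fin n → ℝ) × ℝ × ℝ)‖ = dist xstar y := by
          rw [dist_eq_norm, ← norm_neg]
          congr 1
          abel
        rw [this]
        exact mul_le_mul_of_nonneg_left (le_of_lt hdisty) (by positivity)
      linarith [hbM, h5]
    -- coordinatewise bounds
    set Z : (Fin n → ℝ) × ℝ × ℝ :=
      ((castW (w (dehom n F)), (S:ℝ), (T:ℝ)) - (M:ℝ) • xstar) with hZ
    have hWb : ‖castW (w (dehom n F)) - (M:ℝ) • α‖ ≤ 2 * ((M:ℝ) * η) :=
      le_trans (le_trans (le_refl _) (norm_fst_le Z)) htot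
    have hSb : |(S:ℝ) - (M:ℝ) * (q:ℝ)| ≤ 2 * ((M:ℝ) * η) := by
      have h1 : ‖(Z.2.1 : ℝ)‖ ≤ ‖Z‖ := le_trans (norm_fst_le Z.2) (norm_snd_le Z)
      have h2 : (Z.2.1 : ℝ) = (S:ℝ) - (M:ℝ) * (q:ℝ) := by
        show (S:ℝ) - (M:ℝ) • (q:ℝ) = _
        rw [smul_eq_mul]
      rw [h2, Real.norm_eq_abs] at h1
      exact le_trans h1 htot
    have hTb : |(T:ℝ) - (M:ℝ)| ≤ 2 * ((M:ℝ) * η) := by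
      have h1 : ‖(Z.2.2 : ℝ)‖ ≤ ‖Z‖ := le_trans (norm_snd_le Z.2) (norm_snd_le Z)
      have h2 : (Z.2.2 : ℝ) = (T:ℝ) - (M:ℝ) := by
        show (T:ℝ) - (M:ℝ) • (1:ℝ) = _
        rw [smul_eq_mul, mul_one]
      rw [h2, Real.norm_eq_abs] at h1
      exact le_trans h1 htot
    -- choose k
    have hq0 : (0:ℝ) < (q:ℝ) := by
      have : (0:ℝ) ≤ (d:ℝ) := by positivity
      have h1 : (d:ℝ) < (q:ℝ) := by exact_mod_cast hqd
      linarith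
    have hCη : 0 ≤ C * η := by nlinarith
    set k : ℕ := ⌈((M:ℝ) * (1 + C * η)) / (a:ℝ)⌉₊ with hk
    have hk1 : (M:ℝ) * (1 + C * η) ≤ (k:ℝ) * a := by
      have h1 : ((M:ℝ) * (1 + C * η)) / (a:ℝ) ≤ (k:ℝ) := Nat.le_ceil _
      rw [div_le_iff₀ ha'] at h1
      linarith
    have hk2 : (k:ℝ) * a ≤ (M:ℝ) * (1 + C * η) + a := by
      have h1 : (k:ℝ) < ((M:ℝ) * (1 + C * η)) / (a:ℝ) + 1 :=
        Nat.ceil_lt_add_one (by positivity)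
      have h2 : (k:ℝ) * a ≤ (((M:ℝ) * (1 + C * η)) / (a:ℝ) + 1) * a :=
        mul_le_mul_of_nonneg_right (le_of_lt h1) (le_of_lt ha')
      rw [add_mul, div_mul_cancel₀ _ (ne_of_gt ha'), one_mul] at h2
      exact h2
    have hMk : (M:ℝ) ≤ (k:ℝ) * a := le_trans (by nlinarith) hk1
    have hkpos : 0 < k := by
      by_contra hcon
      push_neg at hcon
      interval_cases k
      simp only [Nat.cast_zero, zero_mul] at hMk
      linarith
    have hk0' : ((k:ℝ)) ≠ 0 := by
      have : (0:ℝ) < (k:ℝ) := by exact_mod_cast hkpos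
      linarith
    -- j and r
    have hTka : T ≤ k * a := by
      have h1 : (T:ℝ) ≤ (M:ℝ) + 2 * ((M:ℝ) * η) := by
        have := (abs_le.mp hTb).2
        linarith
      have h2 : (T:ℝ) ≤ (k:ℝ) * a := by nlinarith
      exact_mod_cast (by push_cast; exact h2 : (T:ℝ) ≤ ((k * a : ℕ) : ℝ))
    set j : ℕ := k * a - T with hjdef
    have hjcast : (j:ℝ) = (k:ℝ) * a - T := by
      rw [hjdef]
      push_cast [Nat.cast_sub hTka]
      ring
    have hjub : (j:ℝ) ≤ C * η * M + a + 2 * ((M:ℝ) * η) := by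
      have h1 : (M:ℝ) - 2 * ((M:ℝ) * η) ≤ (T:ℝ) := by
        have := (abs_le.mp hTb).1
        linarith
      rw [hjcast]
      nlinarith
    have hSje : S + j * e ≤ k * b := by
      have hb' : (b:ℝ) = (q:ℝ) * a := by rw [hq']; field_simp
      have hSub : (S:ℝ) ≤ (M:ℝ) * q + 2 * ((M:ℝ) * η) := by
        have := (abs_le.mp hSb).2
        linarith
      have hTlb : (M:ℝ) - 2 * ((M:ℝ) * η) ≤ (T:ℝ) := by
        have := (abs_le.mp hTb).1
        linarith
      have hje : (j:ℝ) * e ≤ ((k:ℝ) * a - M + 2 * ((M:ℝ) * η)) * e := by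
        apply mul_le_mul_of_nonneg_right _ (by positivity)
        rw [hjcast]
        linarith
      have hXlb : C * η * (M:ℝ) ≤ (k:ℝ) * a - M := by nlinarith
      have hqe0 : ((q:ℝ) - e) ≠ 0 := by linarith
      have hCqe : C * ((q:ℝ) - e) = 2 * ((q:ℝ) - e) + 2 * (1 + (e:ℝ)) := by
        rw [hC]
        field_simp
      have hXqe : 2 * ((M:ℝ) * η) * (1 + (e:ℝ)) ≤ ((k:ℝ) * a - M) * ((q:ℝ) - e) := by
        have h1 : C * η * (M:ℝ) * ((q:ℝ) - e) ≤ ((k:ℝ) * a - M) * ((q:ℝ) - e) :=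
          mul_le_mul_of_nonneg_right hXlb (by linarith)
        have h2 : C * η * (M:ℝ) * ((q:ℝ) - e)
            = η * (M:ℝ) * (2 * ((q:ℝ) - e)) + η * (M:ℝ) * (2 * (1 + (e:ℝ))) := by
          have h3 : C * η * (M:ℝ) * ((q:ℝ) - e) = η * (M:ℝ) * (C * ((q:ℝ) - e)) := by ring
          rw [h3, hCqe]
          ring
        have h4 : 0 ≤ η * (M:ℝ) * (2 * ((q:ℝ) - e)) := by
          apply mul_nonneg (by positivity)
          linarith
        linarith
      have hreal : (S:ℝ) + (j:ℝ) * e ≤ (k:ℝ) * b := by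
        rw [hb']
        nlinarith
      exact_mod_cast (by push_cast; exact hreal : ((S + j * e : ℕ):ℝ) ≤ ((k * b : ℕ) : ℝ))
    set r : ℕ := k * b - (S + j * e) with hrdef
    have hr : S + j * e + r = k * b := by omega
    -- the big polynomial
    have hf₀I : f₀ ∈ I := by
      rw [hIspan]
      exact Ideal.subset_span hf₀S
    obtain ⟨hFI, hFhom⟩ := mem_idealComponent.mp hFmem
    set Fbig : MvPolynomial (Fin (n+1)) ℂ := F * f₀ ^ j * X 0 ^ r with hFbig
    have hFbigI : Fbig ∈ I ^ (k * a) := by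
      have h1 : F * f₀ ^ j ∈ I ^ T * I ^ j :=
        Submodule.mul_mem_mul hFI (Ideal.pow_mem_pow hf₀I j)
      rw [← pow_add] at h1
      have h2 : T + j = k * a := by omega
      rw [h2] at h1
      exact Ideal.mul_mem_right _ _ h1
    have hFbighom : Fbig.IsHomogeneous (k * b) := by
      have h1 : Fbig.IsHomogeneous (S + e * j + 1 * r) :=
        (hFhom.mul (hf₀hom.pow j)).mul ((isHomogeneous_X _ _).pow r)
      have h2 : S + e * j + 1 * r = k * b := by
        rw [Nat.one_mul, Nat.mul_comm e j]
        omega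
      rwa [h2] at h1
    have hFbigcomp : Fbig ∈ idealComponent (Ideal.span Sg ^ (k * a)) (k * b) := by
      rw [← hIspan]
      exact mem_idealComponent.mpr ⟨hFbigI, hFbighom⟩
    have hpow : Fbig ∈ (idealComponent (I ^ a) b) ^ k := by
      have h1 := idealComponent_le_pow hSg ha hab (k := k) hFbigcomp
      rwa [← hIspan] at h1
    set fb : MvPolynomial (Fin n) ℂ := dehom n Fbig with hfb
    have hfbL : fb ∈ (L ^ k : Submodule ℂ (MvPolynomial (Fin n) ℂ)) := by
      rw [hL, ← Submodule.map_pow]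
      exact ⟨Fbig, hpow, rfl⟩
    have hfbsplit : fb = dehom n F * g ^ j := by
      rw [hfb, hFbig, map_mul, map_mul, map_pow, map_pow, map_pow, dehom_X0, one_pow,
        mul_one, hgdef]
    have hfb0 : fb ≠ 0 := by
      rw [hfbsplit]
      exact mul_ne_zero hdF (pow_ne_zero _ hg0)
    have hwfb : castW (w fb) = castW (w (dehom n F)) + (j:ℝ) • castW w₀ := by
      rw [hfbsplit, hw_mul _ _ hdF (pow_ne_zero _ hg0), w_pow hw_mul hg0, castW_add,
        castW_nsmul, hw₀]
    -- the approximating point in the hull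
    have hpt : ((castW (w fb), (k:ℝ)) : (Fin n → ℝ) × ℝ) ∈ subspaceSemigroup w L :=
      ⟨k, w fb, ⟨fb, ⟨hfbL, hfb0⟩, rfl⟩, rfl⟩
    have hhull : ((k:ℝ)⁻¹ • ((castW (w fb), (k:ℝ)) : (Fin n → ℝ) × ℝ))
        ∈ closedConvexConeHull (subspaceSemigroup w L) :=
      cch_smul _ (by positivity) (subset_cch _ hpt)
    refine ⟨_, hhull, ?_⟩
    have hptform : ((k:ℝ)⁻¹ • ((castW (w fb), (k:ℝ)) : (Fin n → ℝ) × ℝ))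
        = (((k:ℝ)⁻¹ • castW (w fb), 1) : (Fin n → ℝ) × ℝ) := by
      refine Prod.ext rfl ?_
      show (k:ℝ)⁻¹ * (k:ℝ) = 1
      rw [inv_mul_cancel₀ hk0']
    rw [hptform]
    rw [Prod.dist_eq]
    simp only [dist_self]
    rw [max_eq_left dist_nonneg]
    rw [dist_eq_norm]
    -- final numeric estimate
    have hvec : ((a:ℝ) • α - (k:ℝ)⁻¹ • castW (w fb))
        = (k:ℝ)⁻¹ • (((k:ℝ) * a) • α - castW (w fb)) := by
      rw [smul_sub, smul_smul, ← mul_assoc, inv_mul_cancel₀ hk0', one_mul]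
    rw [hvec, norm_smul, Real.norm_eq_abs, abs_of_nonneg (by positivity)]
    set RHS : ℝ := 2 * ((M:ℝ) * η) + (C * η * M + a) * A + (C * η * M + a + 2 * ((M:ℝ) * η)) * W₀
      with hRHS
    have hinner : ‖((k:ℝ) * a) • α - castW (w fb)‖ ≤ RHS := by
      have hsplit2 : ((k:ℝ) * a) • α - castW (w fb)
          = ((M:ℝ) • α - castW (w (dehom n F))) + (((k:ℝ) * a - M) • α)
            + (-((j:ℝ) • castW w₀)) := by
        rw [hwfb]
        rw [sub_smul]
        abel
      rw [hsplit2]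
      refine le_trans (norm_add_le _ _) (le_trans (add_le_add (norm_add_le _ _) (le_refl _)) ?_)
      have hkaM : (0:ℝ) ≤ (k:ℝ) * a - M := by nlinarith
      have e1 : ‖(M:ℝ) • α - castW (w (dehom n F))‖ ≤ 2 * ((M:ℝ) * η) := by
        rw [← norm_neg]
        have : -((M:ℝ) • α - castW (w (dehom n F))) = castW (w (dehom n F)) - (M:ℝ) • α := by
          abel
        rw [this]
        exact hWb
      have e2 : ‖((k:ℝ) * a - M) • α‖ ≤ (C * η * M + a) * A := by
        rw [norm_smul, Real.norm_eq_abs, abs_of_nonneg hkaM, hA]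
        apply mul_le_mul_of_nonneg_right _ hA0
        nlinarith
      have e3 : ‖-((j:ℝ) • castW w₀)‖ ≤ (C * η * M + a + 2 * ((M:ℝ) * η)) * W₀ := by
        rw [norm_neg, norm_smul, Real.norm_eq_abs, abs_of_nonneg (by positivity), hW₀]
        exact mul_le_mul_of_nonneg_right hjub hW₀0
      rw [hRHS]
      linarith
    have hRHS0 : 0 ≤ RHS := le_trans (norm_nonneg _) hinner
    have hstep : (k:ℝ)⁻¹ * ‖((k:ℝ) * a) • α - castW (w fb)‖ ≤ (k:ℝ)⁻¹ * RHS :=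
      mul_le_mul_of_nonneg_left hinner (by positivity)
    have hRHSa : RHS * (a:ℝ) ≤ η * (M:ℝ) * D := by
      rw [hRHS, hD]
      nlinarith [mul_le_mul_of_nonneg_right hMa (mul_nonneg (le_of_lt ha') hA0),
        mul_le_mul_of_nonneg_right hMa (mul_nonneg (le_of_lt ha') hW₀0)]
    have hRHSk : RHS ≤ η * ((k:ℝ) * D) := by
      have h1 : η * (M:ℝ) * D ≤ η * ((k:ℝ) * a) * D := by
        apply mul_le_mul_of_nonneg_right _ hD0
        nlinarith
      have h2 : RHS * (a:ℝ) ≤ (η * ((k:ℝ) * D)) * a := by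
        calc RHS * (a:ℝ) ≤ η * (M:ℝ) * D := hRHSa
          _ ≤ η * ((k:ℝ) * a) * D := h1
          _ = (η * ((k:ℝ) * D)) * a := by ring
      exact le_of_mul_le_mul_right h2 ha'
    have hfinal : (k:ℝ)⁻¹ * RHS ≤ η * D := by
      have h1 : (k:ℝ)⁻¹ * RHS ≤ (k:ℝ)⁻¹ * (η * ((k:ℝ) * D)) :=
        mul_le_mul_of_nonneg_left hRHSk (by positivity)
      have h2 : (k:ℝ)⁻¹ * (η * ((k:ℝ) * D)) = η * D := by
        rw [show (k:ℝ)⁻¹ * (η * ((k:ℝ) * D)) = η * D * ((k:ℝ)⁻¹ * (k:ℝ)) by ring,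
          inv_mul_cancel₀ hk0', mul_one]
      linarith
    have hηD : η * D < ε := by
      rw [hηdef]
      rw [div_mul_eq_mul_div, div_lt_iff₀ (by positivity)]
      nlinarith
    linarith
  · -- easy direction
    rintro ⟨β, hβ, rfl⟩
    set T : ((Fin n → ℝ) × ℝ) → ((Fin n → ℝ) × ℝ × ℝ) :=
      fun p => (p.1, (b:ℝ) * p.2, (a:ℝ) * p.2) with hT
    have hTcont : Continuous T := by fun_prop
    have hTlin : ∀ (s t : ℝ) (x y : (Fin n → ℝ) × ℝ), T (s • x + t • y) = s • T x + t • T y := by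
      intro s t x y
      refine Prod.ext rfl (Prod.ext ?_ ?_) <;> · show _ = _ ; simp [hT] ; ring
    have hTsmul : ∀ (c : ℝ) (x : (Fin n → ℝ) × ℝ), T (c • x) = c • T x := by
      intro c x
      refine Prod.ext rfl (Prod.ext ?_ ?_) <;> · show _ = _ ; simp [hT] ; ring
    have hfam : subspaceSemigroup w L ⊆ T ⁻¹' (closedConvexConeHull (gradedSemigroup w I)) := by
      rintro p ⟨u, α', ⟨f, ⟨hfL, hf0⟩, hwf⟩, rfl⟩
      apply subset_cch
      have hfmem : f ∈ Submodule.map (dehom n).toLinearMap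
          (idealComponent (I ^ (u * a)) (u * b)) := by
        have h1 : (L ^ u : Submodule ℂ (MvPolynomial (Fin n) ℂ))
            = Submodule.map (dehom n).toLinearMap ((idealComponent (I ^ a) b) ^ u) := by
          rw [hL, Submodule.map_pow]
        have h2 : Submodule.map (dehom n).toLinearMap ((idealComponent (I ^ a) b) ^ u)
            ≤ Submodule.map (dehom n).toLinearMap (idealComponent (I ^ (u * a)) (u * b)) :=
          Submodule.map_mono (idealComponent_pow_le I a b u)
        exact h2 (h1 ▸ hfL)
      obtain ⟨F, hF, hdF⟩ := hfmem
      refine ⟨u * b, u * a, α', ⟨f, ⟨⟨F, hF, hdF⟩, hf0⟩, hwf⟩, ?_⟩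
      refine Prod.ext rfl (Prod.ext ?_ ?_)
      · show (b:ℝ) * (u:ℝ) = ((u * b : ℕ) : ℝ)
        push_cast; ring
      · show (a:ℝ) * (u:ℝ) = ((u * a : ℕ) : ℝ)
        push_cast; ring
    have hCmem : T ⁻¹' (closedConvexConeHull (gradedSemigroup w I)) ∈
        {C : Set ((Fin n → ℝ) × ℝ) | subspaceSemigroup w L ⊆ C ∧ IsClosed C ∧ Convex ℝ C ∧
          ∀ c : ℝ, 0 ≤ c → ∀ x ∈ C, c • x ∈ C} := by
      refine ⟨hfam, (cch_closed _).preimage hTcont, ?_, ?_⟩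
      · intro x hx y hy s t hs ht hst
        have : T (s • x + t • y) ∈ closedConvexConeHull (gradedSemigroup w I) := by
          rw [hTlin]
          exact cch_convex _ hx hy hs ht hst
        exact this
      · intro c hc x hx
        have : T (c • x) ∈ closedConvexConeHull (gradedSemigroup w I) := by
          rw [hTsmul]
          exact cch_smul _ hc hx
        exact this
    have hβ' : T (β, 1) ∈ closedConvexConeHull (gradedSemigroup w I) :=
      Set.sInter_subset_of_mem hCmem hβ
    have hfinal := cch_smul (gradedSemigroup w I) (c := (a:ℝ)⁻¹) (by positivity) hβ'
    have heq : ((a:ℝ)⁻¹ • T (β, 1)) = (((a:ℝ)⁻¹ • β, (q:ℝ), 1) : (Fin n → ℝ) × ℝ × ℝ) := by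
      refine Prod.ext rfl (Prod.ext ?_ ?_)
      · show (a:ℝ)⁻¹ * ((b:ℝ) * 1) = (q:ℝ)
        rw [hq']; field_simp
      · show (a:ℝ)⁻¹ * ((a:ℝ) * 1) = 1
        field_simp
    rw [heq] at hfinal
    exact hfinal
end
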